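/- arXiv:2009.02064 — 8 statements merged into one kernel-verified Lean document; each statement's English description precedes it below -/
import Mathlib

section
/- Let ρ > 0 be a real number and ω ∈ ℂ with |ω| = 1 and Im(ω) < 0. Define ψ : ℝ → ℂ × ℂ by ψ(z) = (e^{ρ·Im(ω)·z}, ω·e^{ρ·Im(ω)·z}). Then ψ satisfies the eigenvalue equation (D(ρ)ψ)(z) = ρ·Re(ω)·ψ(z) for all z ≥ 0, ψ(0) = (1, ω), ψ is square-integrable on [0,∞), ψ is nowhere zero, and the eigenvalue ρ·Re(ω) lies in the open interval (−ρ, ρ). -/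
open MeasureTheory

/-- The formal half-line Dirac operator with mass `ρ` acting on differentiable
functions `ψ = (ψ₁, ψ₂) : ℝ → ℂ × ℂ`:
`(D(ρ)ψ)(z) = (−i·ψ₁′(z) + ρ·ψ₂(z), ρ·ψ₁(z) + i·ψ₂′(z))`. -/
noncomputable def diracHalfLine (ρ : ℝ) (ψ : ℝ → ℂ × ℂ) (z : ℝ) : ℂ × ℂ :=
  (-Complex.I * deriv (fun t => (ψ t).1) z + (ρ : ℂ) * (ψ z).2,
   (ρ : ℂ) * (ψ z).1 + Complex.I * deriv (fun t => (ψ t).2) z)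

/-- For `ρ > 0` and a unitary boundary parameter `ω ∈ U(1)` with `Im ω < 0`, the
explicit exponential `ψ(z) = (e^{ρ·Im(ω)·z}, ω·e^{ρ·Im(ω)·z})` is a nowhere-zero,
square-integrable solution of `D(ρ)ψ = ρ·Re(ω)·ψ` on `[0,∞)` with boundary value
`ψ(0) = (1, ω)`, and the eigenvalue `ρ·Re(ω)` lies in the gap `(−ρ, ρ)`. -/
theorem halfLineDirac_eigenfunction
    (ρ : ℝ) (hρ : 0 < ρ) (ω : ℂ) (hω : ‖ω‖ = 1) (him : ω.im < 0)
    (ψ : ℝ → ℂ × ℂ)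
    (hψ : ∀ z : ℝ, ψ z =
      (Complex.exp ((ρ * ω.im : ℝ) * z), ω * Complex.exp ((ρ * ω.im : ℝ) * z))) :
    (∀ z : ℝ, 0 ≤ z → diracHalfLine ρ ψ z = ((ρ * ω.re : ℝ) : ℂ) • ψ z) ∧
    ψ 0 = (1, ω) ∧
    IntegrableOn (fun z => ‖ψ z‖ ^ 2) (Set.Ici (0 : ℝ)) ∧
    (∀ z : ℝ, ψ z ≠ 0) ∧
    ρ * ω.re ∈ Set.Ioo (-ρ) ρ := by
  set c : ℝ := ρ * ω.im with hc
  have hnorm : ω.re * ω.re + ω.im * ω.im = 1 := by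
    have := Complex.sq_norm ω
    rw [hω] at this
    simpa [Complex.normSq_apply] using this.symm
  have hωeq : (ω : ℂ) = (ω.re : ℂ) + ω.im * Complex.I := (Complex.re_add_im ω).symm
  have key : ((ω.re : ℂ) - ω.im * Complex.I) * ω = 1 := by
    have h1 : (starRingEnd ℂ) ω * ω = 1 := by
      rw [mul_comm, Complex.mul_conj]
      rw [← Complex.sq_norm, hω]; norm_num
    have h2 : (starRingEnd ℂ) ω = (ω.re : ℂ) - ω.im * Complex.I := by
      apply Complex.ext <;> simp
    rwa [h2] at h1
  have hd : ∀ z : ℝ, HasDerivAt (fun t : ℝ => Complex.exp ((c : ℂ) * t))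
      ((c : ℂ) * Complex.exp ((c : ℂ) * z)) z := by
    intro z
    have h1 := ((((hasDerivAt_id ((z:ℝ) : ℂ)).const_mul (c : ℂ)).cexp).comp_ofReal)
    simp only [id_eq, mul_one] at h1
    have h2 : Complex.exp ((c:ℂ) * (z:ℝ)) * (c:ℂ) = (c : ℂ) * Complex.exp ((c : ℂ) * z) :=
      mul_comm _ _
    exact h2 ▸ h1
  have hψ1 : (fun t => (ψ t).1) = fun t : ℝ => Complex.exp ((c : ℂ) * t) := by
    funext t; rw [hψ t]
  have hψ2 : (fun t => (ψ t).2) = fun t : ℝ => ω * Complex.exp ((c : ℂ) * t) := by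
    funext t; rw [hψ t]
  refine ⟨?_, ?_, ?_, ?_, ?_⟩
  · intro z _
    have hd1 : deriv (fun t => (ψ t).1) z = (c : ℂ) * Complex.exp ((c : ℂ) * z) := by
      rw [hψ1]; exact (hd z).deriv
    have hd2 : deriv (fun t => (ψ t).2) z = ω * ((c : ℂ) * Complex.exp ((c : ℂ) * z)) := by
      rw [hψ2]; exact ((hd z).const_mul ω).deriv
    unfold diracHalfLine
    rw [hd1, hd2, hψ z]
    refine Prod.ext ?_ ?_
    · show -Complex.I * ((c : ℂ) * Complex.exp ((c:ℂ)*z)) + (ρ:ℂ) * (ω * Complex.exp ((c:ℂ)*z))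
        = ((ρ * ω.re : ℝ) : ℂ) * Complex.exp ((c:ℂ)*z)
      simp only [hc]
      push_cast
      linear_combination (ρ : ℂ) * Complex.exp ((ρ:ℂ) * ω.im * z) * hωeq
    · show (ρ:ℂ) * Complex.exp ((c:ℂ)*z) + Complex.I * (ω * ((c:ℂ) * Complex.exp ((c:ℂ)*z)))
        = ((ρ * ω.re : ℝ) : ℂ) * (ω * Complex.exp ((c:ℂ)*z))
      simp only [hc]
      push_cast
      linear_combination (-(ρ : ℂ) * Complex.exp ((ρ:ℂ) * ω.im * z)) * key
  · rw [hψ 0]; simp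
  · have hb : (0:ℝ) < -(2*c) := by
      have : c < 0 := mul_neg_of_pos_of_neg hρ him
      linarith
    have hint : IntegrableOn (fun z : ℝ => Real.exp (-(-(2*c)) * z)) (Set.Ioi (0:ℝ)) :=
      exp_neg_integrableOn_Ioi 0 hb
    have heq : (fun z : ℝ => ‖ψ z‖ ^ 2) = fun z : ℝ => Real.exp (-(-(2*c)) * z) := by
      funext z
      have hn : ‖ψ z‖ = Real.exp (c * z) := by
        rw [hψ z, Prod.norm_def]
        simp only [norm_mul, map_mul, hω, one_mul, max_self,
          ← Complex.ofReal_mul, Complex.norm_exp, Complex.ofReal_re]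
      rw [hn, pow_two, ← Real.exp_add]
      ring_nf
    rw [heq, integrableOn_Ici_iff_integrableOn_Ioi]
    exact hint
  · intro z h
    rw [hψ z] at h
    have := congrArg Prod.fst h
    exact Complex.exp_ne_zero _ this
  · have hre2 : ω.re ^ 2 < 1 := by nlinarith [mul_pos_of_neg_of_neg him him]
    constructor
    · nlinarith [hre2, sq_nonneg (ω.re + 1)]
    · nlinarith [hre2, sq_nonneg (ω.re - 1)]
end

section
/- Let ρ > 0, let ω ∈ ℂ with |ω| = 1 and Im(ω) ≥ 0, and let λ ∈ ℝ with |λ| < ρ. If ψ = (ψ₁, ψ₂) : ℝ → ℂ × ℂ is differentiable, square-integrable on [0,∞), satisfies (D(ρ)ψ)(z) = λ·ψ(z) for all z ≥ 0, and ψ(0) = c·(1, ω) for some c ∈ ℂ, then ψ(z) = 0 for all z ≥ 0. -/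
open MeasureTheory

section DiracKeyAux
open MeasureTheory Complex Set

lemma dirac_key (ρ lam : ℝ) (hρ : 0 < ρ) (hlam : |lam| < ρ)
    (a b : ℝ → ℂ) (hca : Continuous a) (hcb : Continuous b)
    (ha : ∀ z : ℝ, 0 ≤ z → HasDerivAt a (Complex.I * ((lam:ℂ) * a z - (ρ:ℂ) * b z)) z)
    (hb : ∀ z : ℝ, 0 ≤ z → HasDerivAt b (Complex.I * ((ρ:ℂ) * a z - (lam:ℂ) * b z)) z)
    (hL2 : IntegrableOn (fun z => Complex.normSq (a z) + Complex.normSq (b z)) (Set.Ici 0))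
    (hs0 : 0 ≤ ((starRingEnd ℂ) (a 0) * b 0).im) :
    ∀ z : ℝ, 0 ≤ z → a z = 0 ∧ b z = 0 := by
  have hrl : 0 < ρ - |lam| := by linarith
  set v : ℝ → ℂ := fun t => (starRingEnd ℂ) (a t) * b t with hv_def
  set s : ℝ → ℝ := fun t => (v t).im with hs_def
  set p : ℝ → ℝ := fun t => Complex.normSq (a t) + Complex.normSq (b t) with hp_def
  set E : ℝ → ℝ := fun t => ρ * p t - 2 * lam * (v t).re with hE_def
  -- derivative of v
  have hv' : ∀ z : ℝ, 0 ≤ z →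
      HasDerivAt v ((starRingEnd ℂ) (Complex.I * ((lam:ℂ) * a z - (ρ:ℂ) * b z)) * b z
        + (starRingEnd ℂ) (a z) * (Complex.I * ((ρ:ℂ) * a z - (lam:ℂ) * b z))) z := by
    intro z hz
    exact ((ha z hz).star.mul (hb z hz))
  -- derivative of s is E
  have hs' : ∀ z : ℝ, 0 ≤ z → HasDerivAt s (E z) z := by
    intro z hz
    have h1 := (Complex.imCLM.hasFDerivAt.comp_hasDerivAt z (hv' z hz))
    refine h1.congr_deriv ?_
    simp only [hE_def, hp_def, hv_def, Complex.imCLM_apply, Complex.normSq_apply,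
      Complex.add_im, Complex.mul_im, Complex.mul_re, Complex.sub_re, Complex.sub_im,
      Complex.I_re, Complex.I_im, Complex.ofReal_re, Complex.ofReal_im,
      RingHom.coe_coe, Complex.conj_re, Complex.conj_im]
    ring
  -- derivative of E
  have hE' : ∀ z : ℝ, 0 ≤ z → HasDerivAt E (4 * (ρ ^ 2 - lam ^ 2) * s z) z := by
    intro z hz
    have hna : HasDerivAt (fun t => ((starRingEnd ℂ) (a t) * a t).re)
        (((starRingEnd ℂ) (Complex.I * ((lam:ℂ) * a z - (ρ:ℂ) * b z)) * a z
          + (starRingEnd ℂ) (a z) * (Complex.I * ((lam:ℂ) * a z - (ρ:ℂ) * b z))).re) z :=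
      Complex.reCLM.hasFDerivAt.comp_hasDerivAt z ((ha z hz).star.mul (ha z hz))
    have hnb : HasDerivAt (fun t => ((starRingEnd ℂ) (b t) * b t).re)
        (((starRingEnd ℂ) (Complex.I * ((ρ:ℂ) * a z - (lam:ℂ) * b z)) * b z
          + (starRingEnd ℂ) (b z) * (Complex.I * ((ρ:ℂ) * a z - (lam:ℂ) * b z))).re) z :=
      Complex.reCLM.hasFDerivAt.comp_hasDerivAt z ((hb z hz).star.mul (hb z hz))
    have hre : HasDerivAt (fun t => (v t).re)
        (((starRingEnd ℂ) (Complex.I * ((lam:ℂ) * a z - (ρ:ℂ) * b z)) * b z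
          + (starRingEnd ℂ) (a z) * (Complex.I * ((ρ:ℂ) * a z - (lam:ℂ) * b z))).re) z :=
      Complex.reCLM.hasFDerivAt.comp_hasDerivAt z (hv' z hz)
    have hP : ∀ t : ℝ, p t = ((starRingEnd ℂ) (a t) * a t).re + ((starRingEnd ℂ) (b t) * b t).re := by
      intro t
      simp only [hp_def, Complex.normSq_apply, Complex.mul_re, RingHom.coe_coe,
        Complex.conj_re, Complex.conj_im]
      ring
    have hEeq : E = fun t => ρ * (((starRingEnd ℂ) (a t) * a t).re + ((starRingEnd ℂ) (b t) * b t).re)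
        - 2 * lam * (v t).re := by
      funext t; simp only [hE_def]; rw [hP t]
    rw [hEeq]
    have := (((hna.add hnb).const_mul ρ).sub (hre.const_mul (2 * lam)))
    refine this.congr_deriv ?_
    simp only [hs_def, hv_def, Complex.add_re, Complex.mul_re, Complex.mul_im,
      Complex.sub_re, Complex.sub_im, Complex.I_re, Complex.I_im,
      Complex.ofReal_re, Complex.ofReal_im, RingHom.coe_coe, Complex.conj_re, Complex.conj_im]
    ring
  -- E dominates p
  have habs : ∀ t : ℝ, 2 * |lam * (v t).re| ≤ |lam| * p t := by
    intro t
    have h1 : |(v t).re| ≤ ‖v t‖ := Complex.abs_re_le_norm _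
    have h2 : ‖v t‖ = ‖a t‖ * ‖b t‖ := by
      simp [hv_def, map_mul]
    have h3 : 2 * ‖a t‖ * ‖b t‖ ≤
        ‖a t‖ ^ 2 + ‖b t‖ ^ 2 := two_mul_le_add_sq _ _
    have h4 : p t = ‖a t‖ ^ 2 + ‖b t‖ ^ 2 := by
      simp [hp_def, Complex.sq_norm]
    rw [abs_mul, h4]
    nlinarith [abs_nonneg lam, abs_nonneg ((v t).re), norm_nonneg (a t), norm_nonneg (b t)]
  have hEp : ∀ t : ℝ, (ρ - |lam|) * p t ≤ E t := by
    intro t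
    have h := habs t
    have h5 : 2 * (lam * (v t).re) ≤ 2 * |lam * (v t).re| := by
      have := le_abs_self (lam * (v t).re); linarith
    simp only [hE_def]
    nlinarith [Complex.normSq_nonneg (a t), Complex.normSq_nonneg (b t)]
  have hpnn : ∀ t : ℝ, 0 ≤ p t := fun t =>
    add_nonneg (Complex.normSq_nonneg _) (Complex.normSq_nonneg _)
  have hEnn : ∀ t : ℝ, 0 ≤ E t := by
    intro t
    calc (0:ℝ) ≤ (ρ - |lam|) * p t := mul_nonneg hrl.le (hpnn t)
    _ ≤ E t := hEp t
  -- continuity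
  have hcv : Continuous v := (Complex.continuous_conj.comp hca).mul hcb
  have hcp : Continuous p := ((Complex.continuous_normSq.comp hca).add (Complex.continuous_normSq.comp hcb))
  have hcE : Continuous E := ((continuous_const.mul hcp).sub
    (continuous_const.mul (Complex.continuous_re.comp hcv)))
  have hcs : Continuous s := Complex.continuous_im.comp hcv
  -- s is monotone on Ici 0, hence nonnegative
  have hsm : MonotoneOn s (Set.Ici 0) := by
    apply monotoneOn_of_deriv_nonneg (convex_Ici 0) hcs.continuousOn
    · intro x hx
      rw [interior_Ici] at hx
      exact ((hs' x (le_of_lt hx)).differentiableAt).differentiableWithinAt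
    · intro x hx
      rw [interior_Ici] at hx
      rw [(hs' x (le_of_lt hx)).deriv]
      exact hEnn x
  have hsnn : ∀ t : ℝ, 0 ≤ t → 0 ≤ s t := by
    intro t ht
    calc (0:ℝ) ≤ s 0 := hs0
    _ ≤ s t := hsm (Set.self_mem_Ici) ht ht
  -- E is monotone on Ici 0
  have hEm : MonotoneOn E (Set.Ici 0) := by
    apply monotoneOn_of_deriv_nonneg (convex_Ici 0) hcE.continuousOn
    · intro x hx
      rw [interior_Ici] at hx
      exact ((hE' x (le_of_lt hx)).differentiableAt).differentiableWithinAt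
    · intro x hx
      rw [interior_Ici] at hx
      rw [(hE' x (le_of_lt hx)).deriv]
      have : lam ^ 2 < ρ ^ 2 := by nlinarith [abs_nonneg lam, _root_.sq_abs lam, le_abs_self lam]
      have h2 := hsnn x (le_of_lt hx)
      nlinarith
  -- E is integrable on Ici 0
  have hEint : IntegrableOn E (Set.Ici 0) := by
    apply Integrable.mono' (hL2.const_mul (ρ + |lam|)) hcE.aestronglyMeasurable
    rw [ae_restrict_iff' measurableSet_Ici]
    filter_upwards with t ht
    have h1 := habs t
    have h2 := hpnn t
    have h3 : |E t| = E t := abs_of_nonneg (hEnn t)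
    rw [Real.norm_eq_abs, h3]
    simp only [hE_def, hp_def]
    have h5 : -(2 * |lam * (v t).re|) ≤ 2 * (lam * (v t).re) := by
      have := neg_abs_le (lam * (v t).re); linarith
    simp only [hp_def] at h1 h2 ⊢
    nlinarith [abs_nonneg lam]
  -- conclude E ≡ 0 on Ici 0
  intro z hz
  have hEz : E z ≤ 0 := by
    by_contra hpos
    push_neg at hpos
    have hint2 : IntegrableOn E (Set.Ici z) := hEint.mono_set (Set.Ici_subset_Ici.2 hz)
    have hconst : IntegrableOn (fun _ : ℝ => E z) (Set.Ici z) := by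
      apply Integrable.mono' hint2 aestronglyMeasurable_const
      rw [ae_restrict_iff' measurableSet_Ici]
      filter_upwards with t ht
      rw [Real.norm_eq_abs, abs_of_pos hpos]
      exact hEm hz (le_trans hz ht) ht
    rw [integrableOn_const_iff] at hconst
    rcases hconst with h | h
    · exact absurd (enorm_eq_zero.1 h) (ne_of_gt hpos)
    · rw [Real.volume_Ici] at h; exact absurd h (by simp)
  have hpz : p z = 0 := by
    have h1 := hEp z
    have h2 := hpnn z
    nlinarith
  have hsum : Complex.normSq (a z) + Complex.normSq (b z) = 0 := by
    simpa only [hp_def] using hpz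
  have h1 := Complex.normSq_nonneg (a z)
  have h2 := Complex.normSq_nonneg (b z)
  exact ⟨Complex.normSq_eq_zero.1 (by linarith), Complex.normSq_eq_zero.1 (by linarith)⟩

end DiracKeyAux

/-- For a boundary parameter `ω ∈ U(1)` with `Im ω ≥ 0`, the half-line Dirac operator
with mass `ρ > 0` and boundary condition `ψ(0) ∝ (1, ω)` has no eigenvalue in the
essential spectral gap `(−ρ, ρ)`: any square-integrable differentiable solution of the
eigenvalue equation vanishes identically on `[0,∞)`. -/
theorem halfLineDirac_no_eigenvalue_upper
    (ρ : ℝ) (hρ : 0 < ρ) (ω : ℂ) (hω : ‖ω‖ = 1) (him : 0 ≤ ω.im)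
    (lam : ℝ) (hlam : |lam| < ρ)
    (ψ : ℝ → ℂ × ℂ) (hdiff : Differentiable ℝ ψ)
    (hL2 : IntegrableOn (fun z => ‖ψ z‖ ^ 2) (Set.Ici (0 : ℝ)))
    (heig : ∀ z : ℝ, 0 ≤ z → diracHalfLine ρ ψ z = ((lam : ℝ) : ℂ) • ψ z)
    (hbc : ∃ c : ℂ, ψ 0 = c • ((1 : ℂ), ω)) :
    ∀ z : ℝ, 0 ≤ z → ψ z = 0 := by
  obtain ⟨c, hc⟩ := hbc
  have hca : Continuous fun z => (ψ z).1 := (hdiff.continuous).fst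
  have hcb : Continuous fun z => (ψ z).2 := (hdiff.continuous).snd
  have hA : ∀ z : ℝ, 0 ≤ z → HasDerivAt (fun t => (ψ t).1)
      (Complex.I * ((lam:ℂ) * (ψ z).1 - (ρ:ℂ) * (ψ z).2)) z := by
    intro z hz
    have hd : HasDerivAt (fun t => (ψ t).1) (deriv (fun t => (ψ t).1) z) z :=
      ((hdiff z).fst).hasDerivAt
    have h := congrArg Prod.fst (heig z hz)
    simp only [diracHalfLine, Prod.smul_fst, smul_eq_mul] at h
    have heq : deriv (fun t => (ψ t).1) z
        = Complex.I * ((lam:ℂ) * (ψ z).1 - (ρ:ℂ) * (ψ z).2) := by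
      linear_combination Complex.I * h + deriv (fun t => (ψ t).1) z * Complex.I_sq
    rwa [heq] at hd
  have hB : ∀ z : ℝ, 0 ≤ z → HasDerivAt (fun t => (ψ t).2)
      (Complex.I * ((ρ:ℂ) * (ψ z).1 - (lam:ℂ) * (ψ z).2)) z := by
    intro z hz
    have hd : HasDerivAt (fun t => (ψ t).2) (deriv (fun t => (ψ t).2) z) z :=
      ((hdiff z).snd).hasDerivAt
    have h := congrArg Prod.snd (heig z hz)
    simp only [diracHalfLine, Prod.smul_snd, smul_eq_mul] at h
    have heq : deriv (fun t => (ψ t).2) z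
        = Complex.I * ((ρ:ℂ) * (ψ z).1 - (lam:ℂ) * (ψ z).2) := by
      linear_combination -Complex.I * h + deriv (fun t => (ψ t).2) z * Complex.I_sq
    rwa [heq] at hd
  have hL2' : IntegrableOn (fun z => Complex.normSq ((ψ z).1) + Complex.normSq ((ψ z).2))
      (Set.Ici 0) := by
    apply Integrable.mono' (hL2.const_mul 2)
      (((Complex.continuous_normSq.comp hca).add
        (Complex.continuous_normSq.comp hcb)).aestronglyMeasurable)
    filter_upwards with t
    have h1 : ‖(ψ t).1‖ ≤ ‖ψ t‖ := norm_fst_le _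
    have h2 : ‖(ψ t).2‖ ≤ ‖ψ t‖ := norm_snd_le _
    have e1 : Complex.normSq ((ψ t).1) = ‖(ψ t).1‖ ^ 2 := by
      rw [← Complex.sq_norm, Complex.norm_def]
    have e2 : Complex.normSq ((ψ t).2) = ‖(ψ t).2‖ ^ 2 := by
      rw [← Complex.sq_norm, Complex.norm_def]
    have hn : 0 ≤ Complex.normSq ((ψ t).1) + Complex.normSq ((ψ t).2) :=
      add_nonneg (Complex.normSq_nonneg _) (Complex.normSq_nonneg _)
    simp only [Pi.add_apply, Function.comp_apply]
    rw [Real.norm_eq_abs, abs_of_nonneg hn, e1, e2]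
    nlinarith [norm_nonneg (ψ t), norm_nonneg ((ψ t).1), norm_nonneg ((ψ t).2)]
  have hs0 : 0 ≤ ((starRingEnd ℂ) ((ψ 0).1) * (ψ 0).2).im := by
    rw [hc]
    simp only [Prod.smul_mk, smul_eq_mul, mul_one]
    have : (starRingEnd ℂ) c * (c * ω) = (Complex.normSq c : ℂ) * ω := by
      rw [← mul_assoc, mul_comm ((starRingEnd ℂ) c) c, Complex.mul_conj]
    rw [this]
    simp only [Complex.mul_im, Complex.ofReal_re, Complex.ofReal_im, zero_mul, add_zero]
    exact mul_nonneg (Complex.normSq_nonneg c) him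
  intro z hz
  obtain ⟨h1, h2⟩ := dirac_key ρ lam hρ hlam _ _ hca hcb hA hB hL2' hs0 z hz
  exact Prod.ext_iff.mpr ⟨by simpa using h1, by simpa using h2⟩
end

section
/- Let q = q_r·1₂ + i(q⃗·σ) ∈ SU(2) with |q_r| < 1 (equivalently q⃗ ≠ 0). Then there exists a nonzero vector u ∈ ℂ² with (q⃗·σ)u = −|q⃗|·u, and for any such u the function ψ : ℝ → ℂ² × ℂ², ψ(z) = (u·e^{−|q⃗|·z}, (q u)·e^{−|q⃗|·z}), satisfies (D̸ψ)(z) = q_r·ψ(z) for all z ≥ 0, obeys the boundary condition ψ(0) = (u, qu), is square-integrable on [0,∞), is not identically zero, and the eigenvalue q_r lies in (−1, 1). -/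
open MeasureTheory

/-- The Pauli matrices `σ₁, σ₂, σ₃`. -/
noncomputable def pauli1 : Matrix (Fin 2) (Fin 2) ℂ := !![0, 1; 1, 0]
noncomputable def pauli2 : Matrix (Fin 2) (Fin 2) ℂ := !![0, -Complex.I; Complex.I, 0]
noncomputable def pauli3 : Matrix (Fin 2) (Fin 2) ℂ := !![1, 0; 0, -1]

/-- `q⃗·σ = q₁σ₁ + q₂σ₂ + q₃σ₃` for `q⃗ = (q₁,q₂,q₃) ∈ ℝ³`. -/
noncomputable def pauliVec (q1 q2 q3 : ℝ) : Matrix (Fin 2) (Fin 2) ℂ :=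
  (q1 : ℂ) • pauli1 + (q2 : ℂ) • pauli2 + (q3 : ℂ) • pauli3

/-- The formal quaternionic half-line Dirac operator with mass `1`, acting on
differentiable functions `ψ = (φ, χ) : ℝ → ℂ² × ℂ²` by
`(D̸ψ)(z) = (−i·φ′(z) + χ(z), φ(z) + i·χ′(z))`. -/
noncomputable def diracQ (ψ : ℝ → (Fin 2 → ℂ) × (Fin 2 → ℂ)) (z : ℝ) :
    (Fin 2 → ℂ) × (Fin 2 → ℂ) :=
  ((-Complex.I) • deriv (fun t => (ψ t).1) z + (ψ z).2,
   (ψ z).1 + Complex.I • deriv (fun t => (ψ t).2) z)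

lemma eigvec1 (q1 q2 q3 m : ℝ) (hm2 : (m:ℂ)^2 = (q1:ℂ)^2 + q2^2 + q3^2) :
    (pauliVec q1 q2 q3).mulVec ![(q1:ℂ) - Complex.I*q2, -((q3:ℂ)+m)]
      = (-(m:ℂ)) • ![(q1:ℂ) - Complex.I*q2, -((q3:ℂ)+m)] := by
  funext i
  fin_cases i
  · simp [pauliVec, pauli1, pauli2, pauli3, Matrix.mulVec, dotProduct, Fin.sum_univ_two]
    ring
  · simp [pauliVec, pauli1, pauli2, pauli3, Matrix.mulVec, dotProduct, Fin.sum_univ_two]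
    linear_combination -hm2 - (q2:ℂ)^2 * Complex.I_sq

lemma eigvec2 (q1 q2 q3 m : ℝ) (hm2 : (m:ℂ)^2 = (q1:ℂ)^2 + q2^2 + q3^2) :
    (pauliVec q1 q2 q3).mulVec ![((m:ℂ) - q3), -((q1:ℂ)+Complex.I*q2)]
      = (-(m:ℂ)) • ![((m:ℂ) - q3), -((q1:ℂ)+Complex.I*q2)] := by
  funext i
  fin_cases i
  · simp [pauliVec, pauli1, pauli2, pauli3, Matrix.mulVec, dotProduct, Fin.sum_univ_two]
    linear_combination hm2 + (q2:ℂ)^2 * Complex.I_sq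
  · simp [pauliVec, pauli1, pauli2, pauli3, Matrix.mulVec, dotProduct, Fin.sum_univ_two]
    ring

lemma expDeriv (m z : ℝ) :
    HasDerivAt (fun t : ℝ => Complex.exp ((-(m:ℂ)) * t))
      ((-(m:ℂ)) * Complex.exp ((-(m:ℂ))*z)) z := by
  have h1 : HasDerivAt (fun w : ℂ => Complex.exp ((-(m:ℂ))*w))
      ((-(m:ℂ)) * Complex.exp ((-(m:ℂ))*z)) (z:ℂ) := by
    simpa [mul_comm] using ((hasDerivAt_id (z:ℂ)).const_mul (-(m:ℂ))).cexp
  exact h1.comp_ofReal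

/-- Let `q = q_r·1₂ + i(q⃗·σ) ∈ SU(2)` with `|q_r| < 1`.  Then there is a nonzero
`u ∈ ℂ²` with `(q⃗·σ)u = −|q⃗|·u`, and for any such `u` the exponential
`ψ(z) = (u·e^{−|q⃗|z}, (qu)·e^{−|q⃗|z})` is a square-integrable, not identically zero
eigenfunction of the quaternionic half-line Dirac operator with eigenvalue `q_r`,
obeying the boundary condition `ψ(0) = (u, qu)`; moreover `q_r ∈ (−1, 1)`. -/
theorem quaternionicDirac_eigenfunction
    (q : Matrix (Fin 2) (Fin 2) ℂ) (qr q1 q2 q3 : ℝ)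
    (hq : q = (qr : ℂ) • (1 : Matrix (Fin 2) (Fin 2) ℂ) + Complex.I • pauliVec q1 q2 q3)
    (hnorm : qr ^ 2 + (q1 ^ 2 + q2 ^ 2 + q3 ^ 2) = 1)
    (hqr : |qr| < 1) :
    (∃ u : Fin 2 → ℂ, u ≠ 0 ∧
        (pauliVec q1 q2 q3).mulVec u
          = (-(Real.sqrt (q1 ^ 2 + q2 ^ 2 + q3 ^ 2)) : ℂ) • u) ∧
    (∀ u : Fin 2 → ℂ, u ≠ 0 →
      (pauliVec q1 q2 q3).mulVec u
          = (-(Real.sqrt (q1 ^ 2 + q2 ^ 2 + q3 ^ 2)) : ℂ) • u →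
      ∀ ψ : ℝ → (Fin 2 → ℂ) × (Fin 2 → ℂ),
        (∀ z : ℝ, ψ z =
          (Complex.exp ((-(Real.sqrt (q1 ^ 2 + q2 ^ 2 + q3 ^ 2)) : ℂ) * (z : ℂ)) • u,
           Complex.exp ((-(Real.sqrt (q1 ^ 2 + q2 ^ 2 + q3 ^ 2)) : ℂ) * (z : ℂ)) •
             q.mulVec u)) →
        (∀ z : ℝ, 0 ≤ z → diracQ ψ z = (qr : ℂ) • ψ z) ∧
        ψ 0 = (u, q.mulVec u) ∧
        IntegrableOn (fun z => ‖ψ z‖ ^ 2) (Set.Ici (0 : ℝ)) ∧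
        ψ ≠ 0) ∧
    qr ∈ Set.Ioo (-1 : ℝ) 1 := by
  have habs := abs_lt.mp hqr
  have hqr2 : qr ^ 2 < 1 := by nlinarith [sq_abs qr, abs_nonneg qr]
  have hs0 : 0 < q1 ^ 2 + q2 ^ 2 + q3 ^ 2 := by linarith
  set m := Real.sqrt (q1 ^ 2 + q2 ^ 2 + q3 ^ 2) with hmdef
  have hm : 0 < m := Real.sqrt_pos.mpr hs0
  have hm2r : m ^ 2 = q1 ^ 2 + q2 ^ 2 + q3 ^ 2 := Real.sq_sqrt hs0.le
  have hm2 : (m:ℂ)^2 = (q1:ℂ)^2 + q2^2 + q3^2 := by exact_mod_cast congrArg (Complex.ofReal ·) hm2r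
  have hm2c : (m:ℂ)^2 = 1 - (qr:ℂ)^2 := by
    have : m ^ 2 = 1 - qr ^ 2 := by linarith
    exact_mod_cast congrArg (Complex.ofReal ·) this
  refine ⟨?_, ?_, habs.1, habs.2⟩
  · rcases le_or_gt 0 q3 with h3 | h3
    · refine ⟨![(q1:ℂ) - Complex.I*q2, -((q3:ℂ)+m)], ?_, eigvec1 q1 q2 q3 m hm2⟩
      intro h0
      have h1 := congrFun h0 1
      simp at h1
      have : -m + -q3 = 0 := by exact_mod_cast h1
      linarith
    · refine ⟨![((m:ℂ) - q3), -((q1:ℂ)+Complex.I*q2)], ?_, eigvec2 q1 q2 q3 m hm2⟩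
      intro h0
      have h1 := congrFun h0 0
      simp [sub_eq_zero] at h1
      have : m = q3 := by exact_mod_cast h1
      linarith
  · intro u hu0 hu ψ hψ
    have hqu : q.mulVec u = ((qr:ℂ) - Complex.I*m) • u := by
      rw [hq, Matrix.add_mulVec, Matrix.smul_mulVec, Matrix.smul_mulVec,
        Matrix.one_mulVec, hu, smul_smul, ← add_smul]
      ring_nf
    have hψ1 : (fun t => (ψ t).1) = fun t : ℝ => Complex.exp ((-(m:ℂ)) * t) • u :=
      funext fun t => by rw [hψ t]
    have hψ2 : (fun t => (ψ t).2) = fun t : ℝ => Complex.exp ((-(m:ℂ)) * t) • q.mulVec u :=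
      funext fun t => by rw [hψ t]
    refine ⟨?_, ?_, ?_, ?_⟩
    · intro z _
      have hd1 : deriv (fun t => (ψ t).1) z
          = ((-(m:ℂ)) * Complex.exp ((-(m:ℂ))*z)) • u := by
        rw [hψ1]; exact ((expDeriv m z).smul_const u).deriv
      have hd2 : deriv (fun t => (ψ t).2) z
          = ((-(m:ℂ)) * Complex.exp ((-(m:ℂ))*z)) • q.mulVec u := by
        rw [hψ2]; exact ((expDeriv m z).smul_const (q.mulVec u)).deriv
      rw [diracQ, hd1, hd2, hψ z]
      refine Prod.ext ?_ ?_
      · show (-Complex.I) • (((-(m:ℂ)) * Complex.exp ((-(m:ℂ))*z)) • u)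
            + Complex.exp ((-(m:ℂ))*z) • q.mulVec u
            = ((qr:ℂ) • (Complex.exp ((-(m:ℂ))*z) • u, Complex.exp ((-(m:ℂ))*z) • q.mulVec u)).1
        rw [hqu, Prod.smul_mk]
        show _ = (qr:ℂ) • Complex.exp ((-(m:ℂ))*z) • u
        simp only [smul_smul]
        rw [← add_smul]
        congr 1
        ring
      · show Complex.exp ((-(m:ℂ))*z) • u
            + Complex.I • (((-(m:ℂ)) * Complex.exp ((-(m:ℂ))*z)) • q.mulVec u)
            = ((qr:ℂ) • (Complex.exp ((-(m:ℂ))*z) • u, Complex.exp ((-(m:ℂ))*z) • q.mulVec u)).2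
        rw [hqu, Prod.smul_mk]
        show _ = (qr:ℂ) • Complex.exp ((-(m:ℂ))*z) • ((qr:ℂ) - Complex.I*m) • u
        simp only [smul_smul]
        rw [← add_smul]
        congr 1
        linear_combination (-(Complex.exp ((-(m:ℂ))*z))) * hm2c
          + (Complex.exp ((-(m:ℂ))*z)) * (m:ℂ)^2 * Complex.I_sq
    · rw [hψ 0]
      simp
    · have hC : ∀ z : ℝ, ‖ψ z‖ ^ 2
          = ‖((u, q.mulVec u) : (Fin 2 → ℂ) × (Fin 2 → ℂ))‖ ^ 2 * Real.exp (-(2*m)*z) := by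
        intro z
        rw [hψ z]
        have heq : (Complex.exp ((-(m:ℂ))*z) • u, Complex.exp ((-(m:ℂ))*z) • q.mulVec u)
            = Complex.exp ((-(m:ℂ))*z) • ((u, q.mulVec u) : (Fin 2 → ℂ) × (Fin 2 → ℂ)) := rfl
        rw [heq, norm_smul, mul_pow, Complex.norm_exp,
          show ((-(m:ℂ)) * (z:ℂ)) = ((-(m*z) : ℝ) : ℂ) by push_cast; ring,
          Complex.ofReal_re, sq (Real.exp _), ← Real.exp_add]
        ring_nf
      rw [show (fun z => ‖ψ z‖ ^ 2)
          = fun z : ℝ => ‖((u, q.mulVec u) : (Fin 2 → ℂ) × (Fin 2 → ℂ))‖ ^ 2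
              * Real.exp (-(2*m)*z) from funext hC,
        integrableOn_Ici_iff_integrableOn_Ioi]
      exact (exp_neg_integrableOn_Ioi 0 (by positivity)).const_mul _
    · intro h
      apply hu0
      have h0 := hψ 0
      rw [h] at h0
      have h1 := congrArg Prod.fst h0
      simpa using h1.symm
end

section
/- Let q = q_r·1₂ + i(q⃗·σ) ∈ SU(2), let a, λ ∈ ℂ, and let u ∈ ℂ² be nonzero. If (i·a·1₂ + q)u = λ·u and (q† − i·a·1₂)u = λ·u, then λ = q_r and (a·1₂ + q⃗·σ)u = 0; consequently a is real with a = |q⃗| or a = −|q⃗|. -/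
/-- Algebraic reduction of the quaternionic half-line Dirac eigenvalue problem under
the exponential ansatz `ψ(z) = (u, qu)·e^{−a z}`: if `q = q_r·1₂ + i(q⃗·σ) ∈ SU(2)`,
`u ≠ 0`, `(i·a·1₂ + q)u = λ·u` and `(q† − i·a·1₂)u = λ·u`, then `λ = q_r` and
`(a·1₂ + q⃗·σ)u = 0`; consequently `a` is real with `a = |q⃗|` or `a = −|q⃗|`. -/
theorem quaternionicDirac_eigenvalue_algebraic
    (q : Matrix (Fin 2) (Fin 2) ℂ) (qr q1 q2 q3 : ℝ)
    (hq : q = (qr : ℂ) • (1 : Matrix (Fin 2) (Fin 2) ℂ) + Complex.I • pauliVec q1 q2 q3)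
    (hnorm : qr ^ 2 + (q1 ^ 2 + q2 ^ 2 + q3 ^ 2) = 1)
    (a lam : ℂ) (u : Fin 2 → ℂ) (hu : u ≠ 0)
    (h1 : ((Complex.I * a) • (1 : Matrix (Fin 2) (Fin 2) ℂ) + q).mulVec u = lam • u)
    (h2 : (q.conjTranspose - (Complex.I * a) • (1 : Matrix (Fin 2) (Fin 2) ℂ)).mulVec u = lam • u) :
    lam = (qr : ℂ) ∧
    (a • (1 : Matrix (Fin 2) (Fin 2) ℂ) + pauliVec q1 q2 q3).mulVec u = 0 ∧
    (a = (Real.sqrt (q1 ^ 2 + q2 ^ 2 + q3 ^ 2) : ℂ) ∨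
      a = -(Real.sqrt (q1 ^ 2 + q2 ^ 2 + q3 ^ 2) : ℂ)) := by
  subst hq
  have e10 := congrFun h1 0
  have e11 := congrFun h1 1
  have e20 := congrFun h2 0
  have e21 := congrFun h2 1
  simp [pauliVec, pauli1, pauli2, pauli3, Matrix.mulVec, dotProduct, Fin.sum_univ_two,
    Matrix.one_apply, Matrix.conjTranspose_apply] at e10 e11 e20 e21
  have hu' : u 0 ≠ 0 ∨ u 1 ≠ 0 := by
    by_contra h
    push_neg at h
    exact hu (funext fun i => by fin_cases i <;> simp [h.1, h.2])
  -- λ = qr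
  have k0 : (lam - (qr : ℂ)) * u 0 = 0 := by linear_combination (-(1:ℂ)/2) * e10 - (1/2 : ℂ) * e20
  have k1 : (lam - (qr : ℂ)) * u 1 = 0 := by linear_combination (-(1:ℂ)/2) * e11 - (1/2 : ℂ) * e21
  have hlam : lam = (qr : ℂ) := by
    rcases hu' with h | h
    · rcases mul_eq_zero.mp k0 with h' | h'
      · exact sub_eq_zero.mp h'
      · exact absurd h' h
    · rcases mul_eq_zero.mp k1 with h' | h'
      · exact sub_eq_zero.mp h'
      · exact absurd h' h
  -- the kernel equations
  have A' : Complex.I * ((a + (q3 : ℂ)) * u 0 + ((q1 : ℂ) - Complex.I * q2) * u 1) = 0 := by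
    linear_combination (1/2 : ℂ) * e10 - (1/2 : ℂ) * e20
  have B' : Complex.I * (((q1 : ℂ) + Complex.I * q2) * u 0 + (a - (q3 : ℂ)) * u 1) = 0 := by
    linear_combination (1/2 : ℂ) * e11 - (1/2 : ℂ) * e21
  have A : (a + (q3 : ℂ)) * u 0 + ((q1 : ℂ) - Complex.I * q2) * u 1 = 0 :=
    (mul_eq_zero.mp A').resolve_left Complex.I_ne_zero
  have B : ((q1 : ℂ) + Complex.I * q2) * u 0 + (a - (q3 : ℂ)) * u 1 = 0 :=
    (mul_eq_zero.mp B').resolve_left Complex.I_ne_zero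
  have hker : (a • (1 : Matrix (Fin 2) (Fin 2) ℂ) + pauliVec q1 q2 q3).mulVec u = 0 := by
    funext i
    fin_cases i <;>
      simp [pauliVec, pauli1, pauli2, pauli3, Matrix.mulVec, dotProduct, Fin.sum_univ_two,
        Matrix.one_apply]
    · linear_combination A
    · linear_combination B
  -- a^2 = |q⃗|^2
  have hA2 : (a ^ 2 - ((q1 : ℂ) ^ 2 + (q2 : ℂ) ^ 2 + (q3 : ℂ) ^ 2)) * u 0 = 0 := by
    linear_combination (a - (q3 : ℂ)) * A - ((q1 : ℂ) - Complex.I * q2) * B -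
      (q2 : ℂ) ^ 2 * u 0 * Complex.I_sq
  have hB2 : (a ^ 2 - ((q1 : ℂ) ^ 2 + (q2 : ℂ) ^ 2 + (q3 : ℂ) ^ 2)) * u 1 = 0 := by
    linear_combination (-((q1 : ℂ) + Complex.I * q2)) * A + (a + (q3 : ℂ)) * B -
      (q2 : ℂ) ^ 2 * u 1 * Complex.I_sq
  have ha2 : a ^ 2 = ((q1 : ℂ) ^ 2 + (q2 : ℂ) ^ 2 + (q3 : ℂ) ^ 2) := by
    rcases hu' with h | h
    · have := (mul_eq_zero.mp hA2).resolve_right h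
      linear_combination this
    · have := (mul_eq_zero.mp hB2).resolve_right h
      linear_combination this
  have hs : ((Real.sqrt (q1 ^ 2 + q2 ^ 2 + q3 ^ 2) : ℝ) : ℂ) ^ 2 =
      ((q1 : ℂ) ^ 2 + (q2 : ℂ) ^ 2 + (q3 : ℂ) ^ 2) := by
    rw [← Complex.ofReal_pow, Real.sq_sqrt (by positivity)]
    push_cast
    ring
  have hfac : (a - (Real.sqrt (q1 ^ 2 + q2 ^ 2 + q3 ^ 2) : ℂ)) *
      (a + (Real.sqrt (q1 ^ 2 + q2 ^ 2 + q3 ^ 2) : ℂ)) = 0 := by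
    linear_combination ha2 - hs
  refine ⟨hlam, hker, ?_⟩
  rcases mul_eq_zero.mp hfac with h | h
  · exact Or.inl (sub_eq_zero.mp h)
  · exact Or.inr (eq_neg_of_add_eq_zero_left h)
end

section
/- Let q ∈ SU(2) with scalar part q_r, and let λ ∈ ℝ with |λ| < 1. If there exists a differentiable function ψ : ℝ → ℂ² × ℂ² that is square-integrable on [0,∞), not identically zero on [0,∞), satisfies (D̸ψ)(z) = λ·ψ(z) for all z ≥ 0, and obeys the boundary condition ψ(0) = (u, qu) for some u ∈ ℂ², then λ = q_r. -/
open MeasureTheory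

/-- Solutions of `g' = k g` on `[0,∞)` are exponentials. -/
lemma solve_exp (g : ℝ → ℂ) (k : ℂ) (hc : Continuous g)
    (hg : ∀ z : ℝ, 0 ≤ z → HasDerivAt g (k * g z) z) :
    ∀ z : ℝ, 0 ≤ z → g z = g 0 * Complex.exp (k * z) := by
  intro z hz
  set h : ℝ → ℂ := fun t => g t * Complex.exp (-k * t) with hh
  have hexp : ∀ t : ℝ, HasDerivAt (fun t : ℝ => Complex.exp (-k * t)) (Complex.exp (-k * t) * (-k)) t := by
    intro t
    have h1 : HasDerivAt (fun t : ℝ => (-k) * (t : ℂ)) (-k) t := by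
      simpa using (Complex.ofRealCLM.hasDerivAt (x := t)).const_mul (-k)
    simpa using h1.cexp
  have hder : ∀ t : ℝ, 0 ≤ t → HasDerivAt h 0 t := by
    intro t ht
    have := (hg t ht).mul (hexp t)
    refine this.congr_deriv (Eq.symm ?_)
    ring
  have hconst : h z = h 0 := by
    have := constant_of_has_deriv_right_zero (f := h) (a := 0) (b := z)
      ((hc.mul (by continuity)).continuousOn)
      (fun x hx => ((hder x hx.1).hasDerivWithinAt))
    exact this z ⟨hz, le_refl z⟩
  have : g z * Complex.exp (-k * z) = g 0 := by simpa [hh] using hconst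
  field_simp [Complex.exp_ne_zero] at this ⊢
  rw [← this, mul_assoc, ← Complex.exp_add]
  ring_nf
  simp

/-- If `q = q_r·1₂ + i(q⃗·σ) ∈ SU(2)`, `λ ∈ (−1,1)`, and there is a differentiable,
square-integrable, not identically zero solution `ψ` of `D̸ψ = λ·ψ` on `[0,∞)` obeying
the boundary condition `ψ(0) = (u, qu)`, then `λ = q_r`: the only possible eigenvalue
of `D̸(q)` in the essential spectral gap is the scalar part of `q`. -/
theorem quaternionicDirac_eigenvalue_eq_scalar_part
    (q : Matrix (Fin 2) (Fin 2) ℂ) (qr q1 q2 q3 : ℝ)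
    (hq : q = (qr : ℂ) • (1 : Matrix (Fin 2) (Fin 2) ℂ) + Complex.I • pauliVec q1 q2 q3)
    (hnorm : qr ^ 2 + (q1 ^ 2 + q2 ^ 2 + q3 ^ 2) = 1)
    (lam : ℝ) (hlam : |lam| < 1)
    (ψ : ℝ → (Fin 2 → ℂ) × (Fin 2 → ℂ)) (hdiff : Differentiable ℝ ψ)
    (hL2 : IntegrableOn (fun z => ‖ψ z‖ ^ 2) (Set.Ici (0 : ℝ)))
    (hne : ∃ z : ℝ, 0 ≤ z ∧ ψ z ≠ 0)
    (heig : ∀ z : ℝ, 0 ≤ z → diracQ ψ z = (lam : ℂ) • ψ z)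
    (hbc : ∃ u : Fin 2 → ℂ, ψ 0 = (u, q.mulVec u)) :
    lam = qr := by
  obtain ⟨u, hbc⟩ := hbc
  have hlam2 : lam ^ 2 < 1 := by
    have := abs_nonneg lam
    nlinarith [sq_abs lam]
  set κ : ℝ := Real.sqrt (1 - lam ^ 2) with hκdef
  have hκpos : 0 < κ := Real.sqrt_pos.mpr (by linarith)
  have hκsqR : κ ^ 2 = 1 - lam ^ 2 := Real.sq_sqrt (by linarith)
  have hκsq : (κ : ℂ) ^ 2 = 1 - (lam : ℂ) ^ 2 := by
    have := congrArg Complex.ofReal hκsqR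
    push_cast at this
    exact this
  have hκle1 : κ ≤ 1 := by nlinarith
  set c : ℂ := (lam : ℂ) - Complex.I * κ with hcdef
  set φ : ℝ → Fin 2 → ℂ := fun t => (ψ t).1 with hφdef
  set χ : ℝ → Fin 2 → ℂ := fun t => (ψ t).2 with hχdef
  have hφd : Differentiable ℝ φ := hdiff.fst
  have hχd : Differentiable ℝ χ := hdiff.snd
  -- componentwise derivative facts from the eigenvalue equation
  have key : ∀ (j : Fin 2) (z : ℝ), 0 ≤ z →
      HasDerivAt (fun t => φ t j) (Complex.I * ((lam : ℂ) * φ z j) - Complex.I * χ z j) z ∧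
      HasDerivAt (fun t => χ t j) (Complex.I * φ z j - Complex.I * ((lam : ℂ) * χ z j)) z := by
    intro j z hz
    have h1 := congrArg Prod.fst (heig z hz)
    have h2 := congrArg Prod.snd (heig z hz)
    simp only [diracQ, Prod.smul_fst, Prod.smul_snd] at h1 h2
    have hφj : HasDerivAt (fun t => φ t j) (deriv φ z j) z :=
      hasDerivAt_pi.mp ((hφd z).hasDerivAt) j
    have hχj : HasDerivAt (fun t => χ t j) (deriv χ z j) z :=
      hasDerivAt_pi.mp ((hχd z).hasDerivAt) j
    have e1' : -Complex.I * deriv φ z j + χ z j = (lam : ℂ) * φ z j := by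
      have e1 := congrFun h1 j
      simp only [Pi.add_apply, Pi.smul_apply, smul_eq_mul, Pi.neg_apply] at e1
      exact e1
    have e2' : φ z j + Complex.I * deriv χ z j = (lam : ℂ) * χ z j := by
      have e2 := congrFun h2 j
      simp only [Pi.add_apply, Pi.smul_apply, smul_eq_mul] at e2
      exact e2
    constructor
    · convert hφj using 1
      linear_combination (-Complex.I) * e1' - (deriv φ z j) * Complex.I_sq
    · convert hχj using 1
      linear_combination Complex.I * e2' - (deriv χ z j) * Complex.I_sq
  have hcontφ : ∀ j : Fin 2, Continuous fun t => φ t j := fun j =>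
    (continuous_apply j).comp hφd.continuous
  have hcontχ : ∀ j : Fin 2, Continuous fun t => χ t j := fun j =>
    (continuous_apply j).comp hχd.continuous
  -- the "growing mode" P_j := χ_j - c φ_j satisfies P' = κ P
  set P : Fin 2 → ℝ → ℂ := fun j z => χ z j - c * φ z j with hPdef
  have hPde : ∀ (j : Fin 2) (z : ℝ), 0 ≤ z → HasDerivAt (P j) ((κ : ℂ) * P j z) z := by
    intro j z hz
    obtain ⟨h1, h2⟩ := key j z hz
    have hD : HasDerivAt (fun t => χ t j - c * φ t j)
        ((κ : ℂ) * (χ z j - c * φ z j)) z := by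
      have := h2.sub (h1.const_mul c)
      refine this.congr_deriv (Eq.symm ?_)
      rw [hcdef]
      linear_combination Complex.I * φ z j * hκsq +
        ((κ:ℂ) * χ z j - (κ:ℂ) * (lam:ℂ) * φ z j) * Complex.I_sq
    exact hD
  have hPsol : ∀ (j : Fin 2) (z : ℝ), 0 ≤ z → P j z = P j 0 * Complex.exp ((κ : ℂ) * z) :=
    fun j => solve_exp (P j) κ ((hcontχ j).sub (continuous_const.mul (hcontφ j))) (hPde j)
  -- norm bound
  have hPnorm : ∀ (j : Fin 2) (z : ℝ), ‖P j z‖ ≤ 3 * ‖ψ z‖ := by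
    intro j z
    have hcI : ‖Complex.I * (κ:ℂ)‖ = κ := by
      rw [norm_mul, Complex.norm_I, one_mul, Complex.norm_real, Real.norm_eq_abs,
        abs_of_nonneg hκpos.le]
    have hc2 : ‖c‖ ≤ 2 := by
      calc ‖c‖ ≤ ‖(lam:ℂ)‖ + ‖Complex.I * (κ:ℂ)‖ := norm_sub_le _ _
      _ ≤ 1 + 1 := by
          rw [hcI, Complex.norm_real, Real.norm_eq_abs]
          exact add_le_add hlam.le hκle1
      _ = 2 := by norm_num
    have h1 : ‖χ z j‖ ≤ ‖ψ z‖ := le_trans (norm_le_pi_norm _ j) (norm_snd_le (ψ z))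
    have h2 : ‖φ z j‖ ≤ ‖ψ z‖ := le_trans (norm_le_pi_norm _ j) (norm_fst_le (ψ z))
    calc ‖P j z‖ ≤ ‖χ z j‖ + ‖c * φ z j‖ := norm_sub_le _ _
    _ = ‖χ z j‖ + ‖c‖ * ‖φ z j‖ := by rw [norm_mul]
    _ ≤ ‖ψ z‖ + 2 * ‖ψ z‖ := by
        gcongr
    _ = 3 * ‖ψ z‖ := by ring
  -- square-integrability kills the growing mode
  have hP0 : ∀ j : Fin 2, P j 0 = 0 := by
    intro j
    by_contra hP0ne
    have hboundae : ∀ z ∈ Set.Ici (0:ℝ), ‖(fun _ : ℝ => ‖P j 0‖ ^ 2) z‖ ≤ 9 * ‖ψ z‖ ^ 2 := by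
      intro z hz
      have hz0 : (0:ℝ) ≤ z := hz
      have hexp1 : (1:ℝ) ≤ ‖Complex.exp ((κ:ℂ) * z)‖ := by
        rw [← Complex.ofReal_mul, Complex.norm_exp, Complex.ofReal_re]
        calc (1:ℝ) = Real.exp 0 := Real.exp_zero.symm
        _ ≤ _ := Real.exp_le_exp.mpr (mul_nonneg hκpos.le hz0)
      have h1 : ‖P j 0‖ ≤ ‖P j z‖ := by
        rw [hPsol j z hz0, norm_mul]
        nlinarith [norm_nonneg (P j 0)]
      have h2 : ‖P j z‖ ≤ 3 * ‖ψ z‖ := hPnorm j z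
      have h3 : ‖P j 0‖ ^ 2 ≤ 9 * ‖ψ z‖ ^ 2 := by
        nlinarith [norm_nonneg (P j 0), norm_nonneg (ψ z)]
      simpa [abs_of_nonneg (sq_nonneg ‖P j 0‖)] using h3
    have hint : IntegrableOn (fun _ : ℝ => ‖P j 0‖ ^ 2) (Set.Ici (0:ℝ)) := by
      apply Integrable.mono' (hL2.const_mul 9) aestronglyMeasurable_const
      exact (ae_restrict_iff' measurableSet_Ici).mpr (ae_of_all _ hboundae)
    rcases (integrableOn_const_iff (C := ‖P j 0‖ ^ 2)).mp hint with h | h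
    · exact hP0ne (norm_eq_zero.mp ((pow_eq_zero_iff two_ne_zero).mp (enorm_eq_zero.mp h)))
    · rw [Real.volume_Ici] at h
      exact lt_irrefl _ h
  -- hence χ = c φ on [0,∞)
  have hχφ : ∀ (j : Fin 2) (z : ℝ), 0 ≤ z → χ z j = c * φ z j := by
    intro j z hz
    have h := hPsol j z hz
    rw [hP0 j, zero_mul] at h
    have h2 : χ z j - c * φ z j = 0 := h
    linear_combination h2
  -- the reduced ODE: φ' = -κ φ on [0,∞)
  have hφsol : ∀ (j : Fin 2) (z : ℝ), 0 ≤ z →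
      φ z j = φ 0 j * Complex.exp ((-(κ:ℂ)) * z) := by
    intro j
    apply solve_exp (fun t => φ t j) (-(κ:ℂ)) (hcontφ j)
    intro z hz
    have h1 := (key j z hz).1
    convert h1 using 1
    rw [hχφ j z hz, hcdef]
    linear_combination (-(κ:ℂ) * φ z j) * Complex.I_sq
  -- boundary values
  have hφ0 : φ 0 = u := by
    show (ψ 0).1 = u
    rw [hbc]
  have hχ0 : χ 0 = q.mulVec u := by
    show (ψ 0).2 = q.mulVec u
    rw [hbc]
  -- u ≠ 0
  have hune : u ≠ 0 := by
    intro hu0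
    obtain ⟨z, hz, hψz⟩ := hne
    apply hψz
    have hφz : ∀ j, φ z j = 0 := by
      intro j
      rw [hφsol j z hz, hφ0, hu0]
      simp
    have hχz : ∀ j, χ z j = 0 := by
      intro j
      rw [hχφ j z hz, hφz j, mul_zero]
    have hψeq : ψ z = (φ z, χ z) := rfl
    rw [hψeq]
    have hz1 : φ z = 0 := by funext j; simpa using hφz j
    have hz2 : χ z = 0 := by funext j; simpa using hχz j
    rw [hz1, hz2]
    rfl
  -- eigenvector equation: q u = c u
  have heq : ∀ j : Fin 2, q.mulVec u j = c * u j := by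
    intro j
    have h := hχφ j 0 le_rfl
    rw [hχ0, hφ0] at h
    exact h
  have h0 := heq 0
  have h1 := heq 1
  simp [hq, Matrix.mulVec, dotProduct, Fin.sum_univ_two, pauliVec, pauli1, pauli2, pauli3,
    Matrix.add_apply, Matrix.smul_apply, Matrix.one_apply] at h0 h1
  have E0 : ((qr:ℂ) + Complex.I * q3) * u 0 + ((q2:ℂ) + Complex.I * q1) * u 1 = c * u 0 := by
    linear_combination h0 + ((q2:ℂ) * u 1) * Complex.I_sq
  have E1 : (Complex.I * q1 - (q2:ℂ)) * u 0 + ((qr:ℂ) - Complex.I * q3) * u 1 = c * u 1 := by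
    linear_combination h1 - ((q2:ℂ) * u 0) * Complex.I_sq
  -- determinant vanishes
  have hdet : ((qr : ℂ) - c) ^ 2 + ((q1:ℂ) ^ 2 + (q2:ℂ) ^ 2 + (q3:ℂ) ^ 2) = 0 := by
    obtain ⟨j, huj⟩ := Function.ne_iff.mp hune
    fin_cases j
    · have hmul : (((qr : ℂ) - c) ^ 2 + ((q1:ℂ) ^ 2 + (q2:ℂ) ^ 2 + (q3:ℂ) ^ 2)) * u 0 = 0 := by
        linear_combination ((qr:ℂ) - Complex.I * q3 - c) * E0 - ((q2:ℂ) + Complex.I * q1) * E1 +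
          (((q1:ℂ)^2 + (q3:ℂ)^2) * u 0) * Complex.I_sq
      exact (mul_eq_zero.mp hmul).resolve_right huj
    · have hmul : (((qr : ℂ) - c) ^ 2 + ((q1:ℂ) ^ 2 + (q2:ℂ) ^ 2 + (q3:ℂ) ^ 2)) * u 1 = 0 := by
        linear_combination ((qr:ℂ) + Complex.I * q3 - c) * E1 - (Complex.I * q1 - (q2:ℂ)) * E0 +
          (((q1:ℂ)^2 + (q3:ℂ)^2) * u 1) * Complex.I_sq
      exact (mul_eq_zero.mp hmul).resolve_right huj
  have hsum : ((q1:ℂ) ^ 2 + (q2:ℂ) ^ 2 + (q3:ℂ) ^ 2) = 1 - (qr:ℂ) ^ 2 := by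
    have h := congrArg Complex.ofReal (show q1 ^ 2 + q2 ^ 2 + q3 ^ 2 = 1 - qr ^ 2 by linarith)
    push_cast at h
    exact h
  rw [hsum] at hdet
  rw [hcdef] at hdet
  have him := congrArg Complex.im hdet
  simp [Complex.add_im, Complex.sub_im, Complex.mul_im, pow_two, Complex.mul_re] at him
  nlinarith [him, hκpos]
end

section
/- Let q = 1₂ or q = −1₂, and let λ ∈ ℝ with |λ| < 1. If ψ : ℝ → ℂ² × ℂ² is differentiable, square-integrable on [0,∞), satisfies (D̸ψ)(z) = λ·ψ(z) for all z ≥ 0, and obeys the boundary condition ψ(0) = (u, qu) for some u ∈ ℂ², then ψ(z) = 0 for all z ≥ 0. In other words, for q = ±1₂ the quaternionic half-line Dirac operator with boundary condition q has no eigenvalue in the gap (−1, 1). -/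
open MeasureTheory

lemma expODE (h : ℝ → ℂ) (hd : Differentiable ℝ h) (c : ℂ)
    (hode : ∀ x : ℝ, 0 ≤ x → deriv h x = c * h x) :
    ∀ z : ℝ, 0 ≤ z → h z = Complex.exp (c * z) * h 0 := by
  intro z hz
  have key : ∀ x ∈ Set.Icc (0:ℝ) z, Complex.exp (-c * x) * h x = Complex.exp (-c * 0) * h 0 := by
    apply constant_of_has_deriv_right_zero (f := fun x : ℝ => Complex.exp (-c * x) * h x)
    · exact (Continuous.mul (by fun_prop) hd.continuous).continuousOn
    · intro y hy
      have h0 : HasDerivAt (fun x : ℝ => -c * (x:ℂ)) (-c) y := by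
        simpa using (Complex.ofRealCLM.hasDerivAt (x := y)).const_mul (-c)
      have h2 : HasDerivAt (fun x : ℝ => Complex.exp (-c * x) * h x)
          (Complex.exp (-c * y) * (-c) * h y + Complex.exp (-c * y) * deriv h y) y :=
        h0.cexp.mul (hd y).hasDerivAt
      have h3 : Complex.exp (-c * y) * (-c) * h y + Complex.exp (-c * y) * deriv h y = 0 := by
        rw [hode y hy.1]; ring
      exact (h3 ▸ h2).hasDerivWithinAt
  have hkz := key z ⟨hz, le_refl z⟩
  simp only [mul_zero, Complex.exp_zero, one_mul] at hkz
  have h4 : Complex.exp (c * z) * (Complex.exp (-c * z) * h z) = Complex.exp (c * z) * h 0 := by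
    rw [hkz]
  rwa [← mul_assoc, ← Complex.exp_add, show c * z + -c * z = 0 by ring, Complex.exp_zero,
    one_mul] at h4

lemma noLB {k : ℝ → ℝ} (hk : IntegrableOn k (Set.Ici (0:ℝ))) {c : ℝ} (hc : 0 < c)
    (hlb : ∀ z : ℝ, 0 ≤ z → c ≤ k z) : False := by
  have h1 : IntegrableOn (fun _ : ℝ => c) (Set.Ici (0:ℝ)) := by
    refine Integrable.mono' hk aestronglyMeasurable_const ?_
    filter_upwards [ae_restrict_mem measurableSet_Ici] with x hx
    rw [Real.norm_eq_abs, abs_of_pos hc]; exact hlb x hx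
  rcases ((integrableOn_const_iff (C := c)).mp h1) with h | h
  · exact hc.ne' (by simpa using h)
  · simp [Real.volume_Ici] at h

/-- For boundary condition `q = 1₂` or `q = −1₂`, the quaternionic half-line Dirac
operator has no eigenvalue in the gap `(−1, 1)`: any differentiable, square-integrable
solution of `D̸ψ = λ·ψ` on `[0,∞)` with `|λ| < 1` and `ψ(0) = (u, qu)` vanishes
identically on `[0,∞)`. -/
theorem quaternionicDirac_no_eigenvalue_real_bc
    (q : Matrix (Fin 2) (Fin 2) ℂ)
    (hq : q = (1 : Matrix (Fin 2) (Fin 2) ℂ) ∨ q = -(1 : Matrix (Fin 2) (Fin 2) ℂ))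
    (lam : ℝ) (hlam : |lam| < 1)
    (ψ : ℝ → (Fin 2 → ℂ) × (Fin 2 → ℂ)) (hdiff : Differentiable ℝ ψ)
    (hL2 : IntegrableOn (fun z => ‖ψ z‖ ^ 2) (Set.Ici (0 : ℝ)))
    (heig : ∀ z : ℝ, 0 ≤ z → diracQ ψ z = (lam : ℂ) • ψ z)
    (hbc : ∃ u : Fin 2 → ℂ, ψ 0 = (u, q.mulVec u)) :
    ∀ z : ℝ, 0 ≤ z → ψ z = 0 := by
  obtain ⟨u, hu⟩ := hbc
  -- boundary condition as a sign
  obtain ⟨ε, hε, hψ0⟩ : ∃ ε : ℝ, (ε = 1 ∨ ε = -1) ∧ (ψ 0).2 = (ε : ℂ) • (ψ 0).1 := by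
    rcases hq with h | h <;> subst h
    · exact ⟨1, Or.inl rfl, by simp [hu, Matrix.one_mulVec]⟩
    · refine ⟨-1, Or.inr rfl, ?_⟩
      simp [hu, Matrix.neg_mulVec, Matrix.one_mulVec]
  have hlam2 : lam ^ 2 < 1 := by nlinarith [abs_lt.mp hlam, abs_nonneg lam, le_abs_self lam, neg_abs_le lam]
  set μr : ℝ := Real.sqrt (1 - lam ^ 2) with hμrdef
  have hμr : 0 < μr := Real.sqrt_pos.mpr (by linarith)
  have hμr2 : μr ^ 2 = 1 - lam ^ 2 := Real.sq_sqrt (by linarith)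
  set μ : ℂ := (μr : ℂ) with hμdef
  have hμ2 : μ ^ 2 = 1 - (lam : ℂ) ^ 2 := by
    rw [hμdef, ← Complex.ofReal_pow, hμr2]; push_cast; ring
  have key : ∀ j : Fin 2, ∀ z : ℝ, 0 ≤ z → (ψ z).1 j = 0 ∧ (ψ z).2 j = 0 := by
    intro j
    set f : ℝ → ℂ := fun z => (ψ z).1 j with hfdef
    set g : ℝ → ℂ := fun z => (ψ z).2 j with hgdef
    have hΦd : Differentiable ℝ (fun t => (ψ t).1) := hdiff.fst
    have hXd : Differentiable ℝ (fun t => (ψ t).2) := hdiff.snd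
    have hfD : ∀ z : ℝ, HasDerivAt f (deriv (fun t => (ψ t).1) z j) z := by
      intro z
      have h2 := (ContinuousLinearMap.proj (R := ℝ) (φ := fun _ : Fin 2 => ℂ)
        j).hasFDerivAt.comp_hasDerivAt z (hΦd z).hasDerivAt
      exact h2
    have hgD : ∀ z : ℝ, HasDerivAt g (deriv (fun t => (ψ t).2) z j) z := by
      intro z
      have h2 := (ContinuousLinearMap.proj (R := ℝ) (φ := fun _ : Fin 2 => ℂ)
        j).hasFDerivAt.comp_hasDerivAt z (hXd z).hasDerivAt
      exact h2
    have hf : Differentiable ℝ f := fun z => (hfD z).differentiableAt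
    have hg : Differentiable ℝ g := fun z => (hgD z).differentiableAt
    have hdf : ∀ z : ℝ, 0 ≤ z → deriv f z = Complex.I * (lam * f z - g z) := by
      intro z hz
      have e1 := congrFun (congrArg Prod.fst (heig z hz)) j
      simp only [diracQ, Pi.add_apply, Pi.smul_apply, Prod.smul_fst, smul_eq_mul] at e1
      rw [(hfD z).deriv]
      linear_combination Complex.I * e1 + (deriv (fun t => (ψ t).1) z j) * Complex.I_sq
    have hdg : ∀ z : ℝ, 0 ≤ z → deriv g z = -Complex.I * (lam * g z - f z) := by
      intro z hz
      have e2 := congrFun (congrArg Prod.snd (heig z hz)) j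
      simp only [diracQ, Pi.add_apply, Pi.smul_apply, Prod.smul_snd, smul_eq_mul] at e2
      rw [(hgD z).deriv]
      linear_combination (-Complex.I) * e2 + (deriv (fun t => (ψ t).2) z j) * Complex.I_sq
    -- the eigenmodes
    set s : ℝ → ℂ := fun z => f z - ((lam : ℂ) + Complex.I * μ) * g z with hsdef
    set t : ℝ → ℂ := fun z => f z - ((lam : ℂ) - Complex.I * μ) * g z with htdef
    have hsdiff : Differentiable ℝ s := hf.sub (hg.const_mul _)
    have htdiff : Differentiable ℝ t := hf.sub (hg.const_mul _)
    have hderiv_s : ∀ z : ℝ, deriv s z = deriv f z - ((lam : ℂ) + Complex.I * μ) * deriv g z := by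
      intro z
      rw [hsdef]
      rw [deriv_fun_sub (hf z) ((hg z).const_mul _), deriv_const_mul _ (hg z)]
    have hderiv_t : ∀ z : ℝ, deriv t z = deriv f z - ((lam : ℂ) - Complex.I * μ) * deriv g z := by
      intro z
      rw [htdef]
      rw [deriv_fun_sub (hf z) ((hg z).const_mul _), deriv_const_mul _ (hg z)]
    have hds : ∀ z : ℝ, 0 ≤ z → deriv s z = μ * s z := by
      intro z hz
      rw [hderiv_s z, hdf z hz, hdg z hz, hsdef]
      linear_combination (Complex.I * g z) * hμ2 + (μ * (lam : ℂ) * g z - μ * f z) * Complex.I_sq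
    have hdt : ∀ z : ℝ, 0 ≤ z → deriv t z = (-μ) * t z := by
      intro z hz
      rw [hderiv_t z, hdf z hz, hdg z hz, htdef]
      linear_combination (Complex.I * g z) * hμ2 + (μ * f z - μ * (lam : ℂ) * g z) * Complex.I_sq
    have hsrep := expODE s hsdiff μ hds
    have htrep := expODE t htdiff (-μ) hdt
    -- square-integrability forces s 0 = 0
    have hs0 : s 0 = 0 := by
      by_contra h0
      set C : ℝ := 1 + ‖(lam : ℂ) + Complex.I * μ‖ with hCdef
      have hC : 0 < C := by positivity
      have habs : ‖s 0‖ > 0 := by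
        simpa [norm_pos_iff] using h0
      refine noLB hL2 (c := (‖s 0‖ / C) ^ 2) (by positivity) ?_
      intro z hz
      have h1 : ‖s 0‖ ≤ ‖s z‖ := by
        rw [hsrep z hz, norm_mul, Complex.norm_exp]
        have hre : (0:ℝ) ≤ (μ * z).re := by
          simp only [hμdef]
          rw [show ((μr : ℂ) * (z:ℂ)).re = μr * z by simp [Complex.mul_re]]
          positivity
        nlinarith [Real.one_le_exp hre, norm_nonneg (s 0)]
      have h2 : ‖s z‖ ≤ C * ‖ψ z‖ := by
        have hb1 : ‖f z‖ ≤ ‖ψ z‖ :=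
          le_trans (norm_le_pi_norm (ψ z).1 j) (norm_fst_le (ψ z))
        have hb2 : ‖g z‖ ≤ ‖ψ z‖ :=
          le_trans (norm_le_pi_norm (ψ z).2 j) (norm_snd_le (ψ z))
        calc ‖s z‖ ≤ ‖f z‖ +
              ‖(lam : ℂ) + Complex.I * μ‖ * ‖g z‖ := by
              rw [hsdef]
              refine le_trans (norm_sub_le _ _) ?_
              rw [norm_mul]
          _ ≤ C * ‖ψ z‖ := by
              rw [hCdef]
              have := norm_nonneg ((lam : ℂ) + Complex.I * μ)
              nlinarith [norm_nonneg (ψ z)]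
      have h3 : ‖s 0‖ / C ≤ ‖ψ z‖ := by
        rw [div_le_iff₀ hC]
        calc ‖s 0‖ ≤ ‖s z‖ := h1
          _ ≤ C * ‖ψ z‖ := h2
          _ = ‖ψ z‖ * C := by ring
      have h4 : 0 ≤ ‖s 0‖ / C := by positivity
      calc (‖s 0‖ / C) ^ 2 ≤ ‖ψ z‖ ^ 2 := by nlinarith
        _ = ‖ψ z‖ ^ 2 := rfl
    -- boundary condition kills f 0
    have hg0 : g 0 = (ε : ℂ) * f 0 := by
      have := congrFun hψ0 j
      simpa [hfdef, hgdef] using this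
    have hfactor : (1 : ℂ) - (ε : ℂ) * ((lam : ℂ) + Complex.I * μ) ≠ 0 := by
      intro h
      have him := congrArg Complex.im h
      simp [hμdef, Complex.mul_im, Complex.add_im, Complex.mul_re] at him
      rcases hε with h1 | h1 <;> rw [h1] at him <;> simp at him <;> nlinarith
    have hf0 : f 0 = 0 := by
      have : ((1 : ℂ) - (ε : ℂ) * ((lam : ℂ) + Complex.I * μ)) * f 0 = 0 := by
        rw [hsdef] at hs0
        linear_combination hs0 + ((lam : ℂ) + Complex.I * μ) * hg0
      exact (mul_eq_zero.mp this).resolve_left hfactor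
    have hg0' : g 0 = 0 := by rw [hg0, hf0, mul_zero]
    have ht0 : t 0 = 0 := by rw [htdef]; simp only []; rw [show f 0 - ((lam:ℂ) - Complex.I * μ) * g 0 = f 0 - ((lam:ℂ) - Complex.I * μ) * g 0 from rfl]; rw [hf0, hg0']; ring
    have hs0' : s 0 = 0 := hs0
    intro z hz
    have hsz : s z = 0 := by rw [hsrep z hz, hs0', mul_zero]
    have htz : t z = 0 := by rw [htrep z hz, ht0, mul_zero]
    have hμne : (2 : ℂ) * Complex.I * μ ≠ 0 := by
      simp [hμdef, Complex.I_ne_zero, Complex.ofReal_ne_zero, hμr.ne']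
    have hgz : g z = 0 := by
      have : (2 : ℂ) * Complex.I * μ * g z = 0 := by
        rw [hsdef] at hsz; rw [htdef] at htz
        linear_combination htz - hsz
      exact (mul_eq_zero.mp this).resolve_left hμne
    have hfz : f z = 0 := by
      rw [hsdef] at hsz
      linear_combination hsz + ((lam : ℂ) + Complex.I * μ) * hgz
    exact ⟨hfz, hgz⟩
  intro z hz
  exact Prod.ext (funext fun j => (key j z hz).1) (funext fun j => (key j z hz).2)
end

section
/- For every λ ∈ ℝ with |λ| < 1 there exist q ∈ SU(2) whose scalar part equals λ, a nonzero vector u ∈ ℂ², and a differentiable function ψ : ℝ → ℂ² × ℂ², not identically zero and square-integrable on [0,∞), such that ψ(0) = (u, qu) and (D̸ψ)(z) = λ·ψ(z) for all z ≥ 0. That is, the family {D̸(q)}_{q ∈ SU(2)} of quaternionic half-line Dirac operators has the gap-filling property: every point of the common essential spectral gap (−1,1) is attained as an eigenvalue for some boundary condition q. -/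
open MeasureTheory

/-- Gap-filling property of the family `{D̸(q)}_{q ∈ SU(2)}`: every `λ ∈ (−1,1)` in the
common essential spectral gap is attained as an eigenvalue for some boundary condition
`q = λ·1₂ + i(q⃗·σ) ∈ SU(2)` with scalar part `λ`, with a differentiable,
square-integrable, not identically zero eigenfunction obeying `ψ(0) = (u, qu)`. -/
theorem quaternionicDirac_gap_filling (lam : ℝ) (hlam : |lam| < 1) :
    ∃ (q : Matrix (Fin 2) (Fin 2) ℂ) (q1 q2 q3 : ℝ),
      q = (lam : ℂ) • (1 : Matrix (Fin 2) (Fin 2) ℂ) + Complex.I • pauliVec q1 q2 q3 ∧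
      lam ^ 2 + (q1 ^ 2 + q2 ^ 2 + q3 ^ 2) = 1 ∧
      ∃ (u : Fin 2 → ℂ) (ψ : ℝ → (Fin 2 → ℂ) × (Fin 2 → ℂ)),
        u ≠ 0 ∧
        Differentiable ℝ ψ ∧
        (∃ z : ℝ, 0 ≤ z ∧ ψ z ≠ 0) ∧
        IntegrableOn (fun z => ‖ψ z‖ ^ 2) (Set.Ici (0 : ℝ)) ∧
        ψ 0 = (u, q.mulVec u) ∧
        ∀ z : ℝ, 0 ≤ z → diracQ ψ z = (lam : ℂ) • ψ z := by
  have hl2 : lam ^ 2 < 1 := by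
    have h := abs_lt.mp hlam
    nlinarith [h.1, h.2]
  set κ : ℝ := Real.sqrt (1 - lam ^ 2) with hκdef
  have hκpos : 0 < κ := Real.sqrt_pos.mpr (by linarith)
  have hκ2 : κ ^ 2 = 1 - lam ^ 2 := Real.sq_sqrt (by linarith)
  have hC : (lam : ℂ) ^ 2 + (κ : ℂ) ^ 2 = 1 := by
    have h : ((lam ^ 2 + κ ^ 2 : ℝ) : ℂ) = 1 := by rw [hκ2]; norm_num
    push_cast at h
    linear_combination h
  -- boundary condition data
  set c : ℂ := (lam : ℂ) - Complex.I * κ with hcdef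
  set u : Fin 2 → ℂ := ![1, 0] with hudef
  set f : ℝ → ℂ := fun t => Complex.exp (-(κ : ℂ) * t) with hfdef
  set ψ : ℝ → (Fin 2 → ℂ) × (Fin 2 → ℂ) := fun t => (f t • u, (c * f t) • u) with hψdef
  have hf : ∀ z : ℝ, HasDerivAt f ((-(κ : ℂ)) * f z) z := by
    intro z
    have h1 : HasDerivAt (fun t : ℝ => ((t : ℂ))) 1 z := by
      exact Complex.ofRealCLM.hasDerivAt (x := z)
    have h2 : HasDerivAt (fun t : ℝ => (-(κ : ℂ)) * t) ((-(κ : ℂ)) * 1) z :=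
      h1.const_mul _
    have h3 := h2.cexp
    simpa [hfdef, mul_comm, mul_left_comm] using h3
  have hd1 : ∀ z : ℝ, HasDerivAt (fun t => (ψ t).1) (((-(κ : ℂ)) * f z) • u) z := by
    intro z
    simpa [hψdef] using (hf z).smul_const u
  have hd2 : ∀ z : ℝ, HasDerivAt (fun t => (ψ t).2) ((c * ((-(κ : ℂ)) * f z)) • u) z := by
    intro z
    simpa [hψdef, mul_assoc] using ((hf z).const_mul c).smul_const u
  have hfz0 : f 0 = 1 := by simp [hfdef]
  have hune : u ≠ 0 := by
    intro h
    have := congrFun h 0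
    simp [hudef] at this
  refine ⟨(lam : ℂ) • (1 : Matrix (Fin 2) (Fin 2) ℂ) + Complex.I • pauliVec 0 0 (-κ),
    0, 0, -κ, rfl, by nlinarith, u, ψ, hune, ?_, ?_, ?_, ?_, ?_⟩
  · -- Differentiable
    intro z
    exact DifferentiableAt.prodMk (hd1 z).differentiableAt (hd2 z).differentiableAt
  · -- not identically zero
    refine ⟨0, le_refl _, ?_⟩
    intro h
    have h1 : (ψ 0).1 = 0 := by rw [h]; rfl
    simp [hψdef, hfz0] at h1
    exact hune h1
  · -- integrability
    have hint : IntegrableOn (fun z : ℝ => ((1 + ‖c‖) * ‖u‖) ^ 2 * Real.exp (-(2 * κ) * z))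
        (Set.Ici (0 : ℝ)) := by
      have := (exp_neg_integrableOn_Ioi (0 : ℝ) (by linarith : (0:ℝ) < 2 * κ)).const_mul
        (((1 + ‖c‖) * ‖u‖) ^ 2)
      rwa [integrableOn_Ici_iff_integrableOn_Ioi]
    refine Integrable.mono' hint ?_ ?_
    · -- measurability
      have hcont : Continuous ψ := by
        apply Continuous.prodMk
        · exact (Complex.continuous_exp.comp (by continuity)).smul continuous_const
        · exact ((continuous_const.mul (Complex.continuous_exp.comp (by continuity)))).smul
            continuous_const
      exact ((hcont.norm.pow 2)).aestronglyMeasurable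
    · -- bound
      refine MeasureTheory.ae_restrict_of_forall_mem measurableSet_Ici ?_
      intro z hz
      have hfabs : ‖f z‖ = Real.exp (-(κ * z)) := by
        rw [hfdef]
        simp [Complex.norm_exp]
      have h1 : ‖(ψ z).1‖ ≤ (1 + ‖c‖) * ‖u‖ * Real.exp (-(κ * z)) := by
        rw [hψdef]
        simp only [norm_smul, hfabs]
        nlinarith [mul_nonneg (mul_nonneg (norm_nonneg c) (norm_nonneg u)) (Real.exp_pos (-(κ * z))).le]
      have h2 : ‖(ψ z).2‖ ≤ (1 + ‖c‖) * ‖u‖ * Real.exp (-(κ * z)) := by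
        rw [hψdef]
        simp only [norm_smul, norm_mul, hfabs]
        nlinarith [mul_nonneg (mul_nonneg (norm_nonneg c) (norm_nonneg u)) (Real.exp_pos (-(κ * z))).le,
          mul_nonneg (norm_nonneg u) (Real.exp_pos (-(κ * z))).le]
      have hle : ‖ψ z‖ ≤ (1 + ‖c‖) * ‖u‖ * Real.exp (-(κ * z)) := by
        rw [Prod.norm_def]
        exact max_le h1 h2
      have hnn : (0:ℝ) ≤ ‖ψ z‖ := norm_nonneg _
      have := pow_le_pow_left₀ hnn hle 2
      calc ‖‖ψ z‖ ^ 2‖ = ‖ψ z‖ ^ 2 := by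
            rw [Real.norm_of_nonneg (by positivity)]
        _ ≤ ((1 + ‖c‖) * ‖u‖ * Real.exp (-(κ * z))) ^ 2 := this
        _ = ((1 + ‖c‖) * ‖u‖) ^ 2 * Real.exp (-(2 * κ) * z) := by
            rw [mul_pow, sq (Real.exp (-(κ * z))), ← Real.exp_add]
            congr 1
            ring_nf
  · -- boundary condition
    have hmul : (((lam : ℂ) • (1 : Matrix (Fin 2) (Fin 2) ℂ) +
        Complex.I • pauliVec 0 0 (-κ))).mulVec u = c • u := by
      funext i
      fin_cases i <;>
        simp [pauliVec, pauli1, pauli2, pauli3, Matrix.mulVec, dotProduct,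
          hudef, hcdef, Fin.sum_univ_two, Matrix.one_apply] <;> ring
    rw [hmul]
    simp [hψdef, hfz0]
  · -- eigenvalue equation
    intro z _
    have e1 : deriv (fun t => (ψ t).1) z = ((-(κ : ℂ)) * f z) • u := (hd1 z).deriv
    have e2 : deriv (fun t => (ψ t).2) z = (c * ((-(κ : ℂ)) * f z)) • u := (hd2 z).deriv
    rw [diracQ, e1, e2]
    have hψz1 : (ψ z).1 = f z • u := rfl
    have hψz2 : (ψ z).2 = (c * f z) • u := rfl
    have hsm : (lam : ℂ) • ψ z = (((lam : ℂ) * f z) • u, ((lam : ℂ) * (c * f z)) • u) := by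
      rw [hψdef]
      simp [Prod.smul_mk, smul_smul]
    rw [hψz1, hψz2, hsm]
    refine Prod.ext ?_ ?_
    · show (-Complex.I) • (((-(κ : ℂ)) * f z) • u) + (c * f z) • u = ((lam : ℂ) * f z) • u
      rw [smul_smul, ← add_smul]
      congr 1
      rw [hcdef]; ring
    · show f z • u + Complex.I • ((c * ((-(κ : ℂ)) * f z)) • u) = ((lam : ℂ) * (c * f z)) • u
      rw [smul_smul, ← add_smul]
      congr 1
      rw [hcdef]
      linear_combination (-(f z)) * hC + (f z * (κ:ℂ)^2) * Complex.I_sq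
end

section
/- Let Γ ∈ SU(2) and let Q be a nonzero 2×2 complex matrix of the quaternionic form [[α, −conj(β)],[β, conj(α)]] with α, β ∈ ℂ, and set |Q| := √(|α|² + |β|²) and μ := (1/2)·tr(Q†Γ) (which is a real number). If |μ| < |Q|, then setting a := √(|Q|² − μ²) > 0, there exists a nonzero vector u ∈ ℂ² such that the function ψ(z) := (u·e^{−a z}, (Γu)·e^{−a z}) satisfies, for all z ≥ 0, the eigenvalue equation (−i·φ′(z) + Q†·χ(z), Q·φ(z) + i·χ′(z)) = μ·(φ(z), χ(z)) where ψ = (φ, χ); thus ψ is a square-integrable, exponentially decaying eigenfunction of the half-space Weyl fiber operator h̃^W(Q;Γ) with eigenvalue μ, obeying the boundary condition ψ(0) = (u, Γu). -/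
open MeasureTheory

/-- The half-space Weyl fiber operator `h̃^W(Q;Γ) = [[−i d/dz, Q†],[Q, i d/dz]]`
at boundary momentum quaternion `Q`, acting on differentiable functions
`ψ = (φ, χ) : ℝ → ℂ² × ℂ²`. -/
noncomputable def weylFiber (Q : Matrix (Fin 2) (Fin 2) ℂ)
    (ψ : ℝ → (Fin 2 → ℂ) × (Fin 2 → ℂ)) (z : ℝ) : (Fin 2 → ℂ) × (Fin 2 → ℂ) :=
  ((-Complex.I) • deriv (fun t => (ψ t).1) z + Q.conjTranspose.mulVec ((ψ z).2),
   Q.mulVec ((ψ z).1) + Complex.I • deriv (fun t => (ψ t).2) z)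

private lemma mulVec_eq_smul_fin_two (M : Matrix (Fin 2) (Fin 2) ℂ) (u : Fin 2 → ℂ) (lam : ℂ)
    (h0 : M 0 0 * u 0 + M 0 1 * u 1 = lam * u 0)
    (h1 : M 1 0 * u 0 + M 1 1 * u 1 = lam * u 1) :
    M.mulVec u = lam • u := by
  funext j
  revert j
  rw [Fin.forall_fin_two]
  constructor
  · simpa [Matrix.mulVec, dotProduct, Fin.sum_univ_two] using h0
  · simpa [Matrix.mulVec, dotProduct, Fin.sum_univ_two] using h1

/-- Let `Γ ∈ SU(2)`, let `Q = [[α, −conj(β)],[β, conj(α)]]` be a nonzero quaternionic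
momentum matrix with modulus `|Q| = √(|α|² + |β|²)`, and let `μ = (1/2)·tr(Q†Γ)` (a
real number).  If `|μ| < |Q|` then, with `a := √(|Q|² − μ²) > 0`, there is a nonzero
`u ∈ ℂ²` such that `ψ(z) = (u·e^{−a z}, (Γu)·e^{−a z})` is a square-integrable,
exponentially decaying eigenfunction of the half-space Weyl fiber operator
`h̃^W(Q;Γ)` with eigenvalue `μ`, obeying the boundary condition `ψ(0) = (u, Γu)`:
the momentum `Q` lies on the Fermi surface `S_μ`. -/
theorem weyl_fermi_surface_eigenfunction
    (Γ : Matrix (Fin 2) (Fin 2) ℂ)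
    (hΓ : Γ ∈ Matrix.unitaryGroup (Fin 2) ℂ) (hdet : Γ.det = 1)
    (α β : ℂ) (hQ0 : ¬(α = 0 ∧ β = 0))
    (Q : Matrix (Fin 2) (Fin 2) ℂ)
    (hQ : Q = !![α, -(starRingEnd ℂ β); β, starRingEnd ℂ α])
    (μ : ℝ) (hμ : (μ : ℂ) = (1 / 2) * (Q.conjTranspose * Γ).trace)
    (hgap : |μ| < Real.sqrt (‖α‖ ^ 2 + ‖β‖ ^ 2)) :
    0 < Real.sqrt (Real.sqrt (‖α‖ ^ 2 + ‖β‖ ^ 2) ^ 2 - μ ^ 2) ∧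
    ∃ u : Fin 2 → ℂ, u ≠ 0 ∧
      ∀ ψ : ℝ → (Fin 2 → ℂ) × (Fin 2 → ℂ),
        (∀ z : ℝ, ψ z =
          (Complex.exp
              (-(Real.sqrt (Real.sqrt (‖α‖ ^ 2 + ‖β‖ ^ 2) ^ 2
                  - μ ^ 2) : ℂ) * (z : ℂ)) • u,
           Complex.exp
              (-(Real.sqrt (Real.sqrt (‖α‖ ^ 2 + ‖β‖ ^ 2) ^ 2
                  - μ ^ 2) : ℂ) * (z : ℂ)) • Γ.mulVec u)) →
        (∀ z : ℝ, 0 ≤ z → weylFiber Q ψ z = (μ : ℂ) • ψ z) ∧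
        ψ 0 = (u, Γ.mulVec u) ∧
        IntegrableOn (fun z => ‖ψ z‖ ^ 2) (Set.Ici (0 : ℝ)) := by
  have hk0 : 0 < ‖α‖ ^ 2 + ‖β‖ ^ 2 := by
    rcases not_and_or.mp hQ0 with h | h
    · have : 0 < ‖α‖ := norm_pos_iff.mpr h
      positivity
    · have : 0 < ‖β‖ := norm_pos_iff.mpr h
      positivity
  set k : ℝ := ‖α‖ ^ 2 + ‖β‖ ^ 2 with hk_def
  set a : ℝ := Real.sqrt (Real.sqrt k ^ 2 - μ ^ 2) with ha_def
  have hr2 : Real.sqrt k ^ 2 = k := Real.sq_sqrt hk0.le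
  have hμ2 : μ ^ 2 < k := by
    nlinarith [abs_nonneg μ, sq_abs μ, Real.sqrt_nonneg k, hgap]
  have ha2 : a ^ 2 = k - μ ^ 2 := by
    rw [ha_def, Real.sq_sqrt (by rw [hr2]; linarith), hr2]
  have ha : 0 < a := by
    rw [ha_def]
    apply Real.sqrt_pos.mpr
    rw [hr2]; linarith
  refine ⟨ha, ?_⟩
  set M : Matrix (Fin 2) (Fin 2) ℂ := Q.conjTranspose * Γ with hM_def
  have hQQ : Q * Q.conjTranspose = (k : ℂ) • (1 : Matrix (Fin 2) (Fin 2) ℂ) := by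
    have hconj : ∀ z : ℂ, starRingEnd ℂ z * z = (Complex.normSq z : ℂ) := fun z => by
      rw [mul_comm, Complex.mul_conj]
    subst hQ
    ext i j
    fin_cases i <;> fin_cases j <;>
      simp [Matrix.mul_apply, Fin.sum_univ_two, Matrix.one_apply, Matrix.conjTranspose_apply,
        Complex.mul_conj, hconj, hk_def, Complex.sq_norm] <;> push_cast <;> ring
  have hdetQ : Q.det = (k : ℂ) := by
    have hconj : ∀ z : ℂ, starRingEnd ℂ z * z = (Complex.normSq z : ℂ) := fun z => by
      rw [mul_comm, Complex.mul_conj]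
    subst hQ
    rw [Matrix.det_fin_two_of, hk_def]
    have h1 := hconj β
    have h2 := Complex.mul_conj α
    push_cast [← Complex.sq_norm] at h1 h2 ⊢
    linear_combination h1 + h2
  have hdetM : M.det = (k : ℂ) := by
    rw [hM_def, Matrix.det_mul, hdet, mul_one, Matrix.det_conjTranspose, hdetQ]
    simp
  have hΓ1 : Γ.conjTranspose * Γ = 1 := by
    simpa [Matrix.star_eq_conjTranspose] using (Matrix.mem_unitaryGroup_iff'.mp hΓ)
  have hΓ2 : Γ * Γ.conjTranspose = 1 := by
    simpa [Matrix.star_eq_conjTranspose] using (Matrix.mem_unitaryGroup_iff.mp hΓ)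
  have hMM : M.conjTranspose * M = (k : ℂ) • (1 : Matrix (Fin 2) (Fin 2) ℂ) := by
    rw [hM_def, Matrix.conjTranspose_mul, Matrix.conjTranspose_conjTranspose]
    calc Γ.conjTranspose * Q * (Q.conjTranspose * Γ)
        = Γ.conjTranspose * (Q * Q.conjTranspose) * Γ := by
          rw [Matrix.mul_assoc, Matrix.mul_assoc, Matrix.mul_assoc]
      _ = (k : ℂ) • (Γ.conjTranspose * Γ) := by
          rw [hQQ]; rw [Matrix.mul_smul, Matrix.smul_mul, Matrix.mul_one]
      _ = (k : ℂ) • (1 : Matrix (Fin 2) (Fin 2) ℂ) := by rw [hΓ1]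
  have hMunit : IsUnit M.det := by
    rw [hdetM]
    exact isUnit_iff_ne_zero.mpr (by exact_mod_cast (ne_of_gt hk0))
  have hAdj : M.conjTranspose = M.adjugate := by
    have h1 : M.conjTranspose * M = M.adjugate * M := by
      rw [hMM, Matrix.adjugate_mul, hdetM]
    calc M.conjTranspose = M.conjTranspose * (M * M⁻¹) := by
          rw [Matrix.mul_nonsing_inv M hMunit, Matrix.mul_one]
      _ = M.adjugate * (M * M⁻¹) := by
          rw [← Matrix.mul_assoc, h1, Matrix.mul_assoc]
      _ = M.adjugate := by rw [Matrix.mul_nonsing_inv M hMunit, Matrix.mul_one]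
  have hc1 : starRingEnd ℂ (M 0 0) = M 1 1 := by
    have := congrFun (congrFun hAdj 0) 0
    simpa [Matrix.adjugate_fin_two, Matrix.conjTranspose_apply] using this
  have hc2 : starRingEnd ℂ (M 1 0) = -(M 0 1) := by
    have := congrFun (congrFun hAdj 0) 1
    simpa [Matrix.adjugate_fin_two, Matrix.conjTranspose_apply] using this
  have hc3 : starRingEnd ℂ (M 0 1) = -(M 1 0) := by
    have := congrFun (congrFun hAdj 1) 0
    simpa [Matrix.adjugate_fin_two, Matrix.conjTranspose_apply] using this
  have hc4 : starRingEnd ℂ (M 1 1) = M 0 0 := by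
    have := congrFun (congrFun hAdj 1) 1
    simpa [Matrix.adjugate_fin_two, Matrix.conjTranspose_apply] using this
  have htr : M 0 0 + M 1 1 = 2 * (μ : ℂ) := by
    have h := hμ
    rw [Matrix.trace_fin_two] at h
    linear_combination (-2 : ℂ) * h
  have hdet2 : M 0 0 * M 1 1 - M 0 1 * M 1 0 = (k : ℂ) := by
    rw [← hdetM, Matrix.det_fin_two]
  have hkc : (k : ℂ) = (μ : ℂ) ^ 2 + (a : ℂ) ^ 2 := by
    have h : (k : ℝ) = μ ^ 2 + a ^ 2 := by linarith [ha2]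
    exact_mod_cast congrArg Complex.ofReal h
  set lam : ℂ := (μ : ℂ) - (a : ℂ) * Complex.I with hlam_def
  have hlam_eq : lam ^ 2 - 2 * (μ : ℂ) * lam + (k : ℂ) = 0 := by
    rw [hkc, hlam_def]
    linear_combination ((a : ℂ) ^ 2) * Complex.I_sq
  have hmv : ∀ (v : Fin 2 → ℂ) (j : Fin 2), M.mulVec v j = M j 0 * v 0 + M j 1 * v 1 := by
    intro v j
    simp [Matrix.mulVec, dotProduct, Fin.sum_univ_two]
  -- choose the eigenvector
  obtain ⟨u, hu0, hMu⟩ : ∃ u : Fin 2 → ℂ, u ≠ 0 ∧ M.mulVec u = lam • u := by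
    by_cases hcase : M 1 0 = 0 ∧ M 0 0 = lam
    · refine ⟨![lam - starRingEnd ℂ (M 0 0), M 1 0], ?_, ?_⟩
      · intro h
        have h0 : lam - starRingEnd ℂ (M 0 0) = 0 := congrFun h 0
        rw [hcase.2, hlam_def] at h0
        have h2 : (-a : ℝ) - a = 0 := by
          simpa [Complex.ext_iff] using h0
        linarith
      · apply mulVec_eq_smul_fin_two
        · simp only [Matrix.cons_val_zero, Matrix.cons_val_one, Matrix.head_cons]
          rw [hcase.1, hcase.2]
          ring
        · simp only [Matrix.cons_val_zero, Matrix.cons_val_one, Matrix.head_cons]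
          rw [hcase.1]
          ring
    · refine ⟨![starRingEnd ℂ (M 1 0), M 0 0 - lam], ?_, ?_⟩
      · intro h
        have h0 : starRingEnd ℂ (M 1 0) = 0 := congrFun h 0
        have h1 : M 0 0 - lam = 0 := congrFun h 1
        exact hcase ⟨by simpa using congrArg (starRingEnd ℂ) h0, by linear_combination h1⟩
      · apply mulVec_eq_smul_fin_two
        · simp only [Matrix.cons_val_zero, Matrix.cons_val_one, Matrix.head_cons]
          linear_combination (M 0 0 - lam) * hc2
        · simp only [Matrix.cons_val_zero, Matrix.cons_val_one, Matrix.head_cons]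
          linear_combination (M 1 0) * hc2 + hdet2 + (-lam) * htr + hlam_eq
  have hMu0 : M 0 0 * u 0 + M 0 1 * u 1 = lam * u 0 := by
    have := congrFun hMu 0
    rw [hmv] at this
    simpa using this
  have hMu1 : M 1 0 * u 0 + M 1 1 * u 1 = lam * u 1 := by
    have := congrFun hMu 1
    rw [hmv] at this
    simpa using this
  have hMHu : M.conjTranspose.mulVec u = ((μ : ℂ) + (a : ℂ) * Complex.I) • u := by
    apply mulVec_eq_smul_fin_two
    · simp only [Matrix.conjTranspose_apply, Complex.star_def]
      linear_combination u 0 * hc1 + u 1 * hc2 + u 0 * htr - hMu0 - u 0 * hlam_def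
    · simp only [Matrix.conjTranspose_apply, Complex.star_def]
      linear_combination u 0 * hc3 + u 1 * hc4 + u 1 * htr - hMu1 - u 1 * hlam_def
  have hQGu : Q.conjTranspose.mulVec (Γ.mulVec u) = lam • u := by
    rw [Matrix.mulVec_mulVec, ← hM_def, hMu]
  have hQu : Q.mulVec u = ((μ : ℂ) + (a : ℂ) * Complex.I) • Γ.mulVec u := by
    have h5 : Γ.conjTranspose.mulVec (Q.mulVec u) = ((μ : ℂ) + (a : ℂ) * Complex.I) • u := by
      rw [Matrix.mulVec_mulVec]
      have hMH : Γ.conjTranspose * Q = M.conjTranspose := by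
        rw [hM_def, Matrix.conjTranspose_mul, Matrix.conjTranspose_conjTranspose]
      rw [hMH, hMHu]
    calc Q.mulVec u = (Γ * Γ.conjTranspose).mulVec (Q.mulVec u) := by
          rw [hΓ2, Matrix.one_mulVec]
      _ = Γ.mulVec (Γ.conjTranspose.mulVec (Q.mulVec u)) := by
          simp only [Matrix.mulVec_mulVec, Matrix.mul_assoc]
      _ = Γ.mulVec (((μ : ℂ) + (a : ℂ) * Complex.I) • u) := by rw [h5]
      _ = ((μ : ℂ) + (a : ℂ) * Complex.I) • Γ.mulVec u := by rw [Matrix.mulVec_smul]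
  refine ⟨u, hu0, ?_⟩
  intro ψ hψ
  have hφ : (fun t => (ψ t).1) = fun t : ℝ => Complex.exp (-(a : ℂ) * t) • u :=
    funext fun t => by rw [hψ t]
  have hχ : (fun t => (ψ t).2) = fun t : ℝ => Complex.exp (-(a : ℂ) * t) • Γ.mulVec u :=
    funext fun t => by rw [hψ t]
  have hd : ∀ (v : Fin 2 → ℂ) (z : ℝ),
      HasDerivAt (fun t : ℝ => Complex.exp (-(a : ℂ) * t) • v)
        ((-(a : ℂ) * Complex.exp (-(a : ℂ) * z)) • v) z := by
    intro v z
    have h1 : HasDerivAt (fun t : ℝ => -(a : ℂ) * (t : ℂ)) (-(a : ℂ)) z := by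
      simpa using (Complex.ofRealCLM.hasDerivAt (x := z)).const_mul (-(a : ℂ))
    have h2 := (h1.cexp).smul_const v
    rwa [mul_comm (Complex.exp _)] at h2
  refine ⟨?_, ?_, ?_⟩
  · intro z _
    have hd1 := (hd u z).deriv
    have hd2 := (hd (Γ.mulVec u) z).deriv
    simp only [weylFiber, hφ, hχ, hψ z, hd1, hd2]
    have hc : ∀ w : ℂ, Complex.exp w ≠ 0 := Complex.exp_ne_zero
    rw [Prod.smul_mk, Prod.mk.injEq]
    constructor
    · simp only [Matrix.mulVec_smul, hQGu, smul_smul]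
      rw [← add_smul]
      congr 1
      linear_combination Complex.exp (-(a : ℂ) * z) * hlam_def
    · simp only [Matrix.mulVec_smul, hQu, smul_smul]
      rw [← add_smul]
      congr 1
      ring
  · rw [hψ 0]
    norm_num
  · have hnorm : ∀ z : ℝ, ‖ψ z‖ ^ 2
        = (max ‖u‖ ‖Γ.mulVec u‖) ^ 2 * Real.exp (-(2 * a) * z) := by
      intro z
      rw [hψ z, Prod.norm_def, norm_smul, norm_smul]
      have habs : ‖Complex.exp (-(a : ℂ) * z)‖ = Real.exp (-(a * z)) := by
        rw [Complex.norm_exp]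
        congr 1
        simp
      rw [habs]
      rw [← mul_max_of_nonneg _ _ (Real.exp_nonneg _)]
      rw [mul_pow]
      have he : Real.exp (-(a * z)) ^ 2 = Real.exp (-(2 * a) * z) := by
        rw [sq, ← Real.exp_add]
        congr 1
        ring
      rw [he]
      ring
    have hint : IntegrableOn
        (fun z : ℝ => (max ‖u‖ ‖Γ.mulVec u‖) ^ 2 * Real.exp (-(2 * a) * z))
        (Set.Ici (0 : ℝ)) := by
      rw [integrableOn_Ici_iff_integrableOn_Ioi]
      exact (exp_neg_integrableOn_Ioi 0 (by positivity : (0 : ℝ) < 2 * a)).const_mul _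
    have heq : (fun z : ℝ => ‖ψ z‖ ^ 2)
        = fun z : ℝ => (max ‖u‖ ‖Γ.mulVec u‖) ^ 2 * Real.exp (-(2 * a) * z) :=
      funext hnorm
    rw [heq]
    exact hint
end
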